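/- arXiv:2305.09029 — 9 statements merged into one kernel-verified Lean document; each statement's English description precedes it below -/
import Mathlib

section
/- Let {f_k}_{k≥0} be a log-concave (respectively, log-convex) sequence, let n be a positive integer, and let A_0, A_1, …, A_{⌊n/2⌋} be real numbers having no more than one change of sign, i.e., there exist indices 0 ≤ p ≤ q ≤ ⌊n/2⌋+1 such that A_k < 0 for k < p, A_k = 0 for p ≤ k < q, and A_k > 0 for q ≤ k ≤ ⌊n/2⌋. If Σ_{k=0}^{⌊n/2⌋} A_k ≥ 0 (respectively, ≤ 0), then Σ_{k=0}^{⌊n/2⌋} f_k f_{n−k} A_k ≥ 0 (respectively, ≤ 0). -/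
/-- A nonnegative, not identically zero real sequence is log-concave if
`f k * f (k+2) ≤ f (k+1) ^ 2` for all `k` and its support is an interval of integers. -/
def IsLogConcaveSeq (f : ℕ → ℝ) : Prop :=
  (∀ k, 0 ≤ f k) ∧ (∃ k, f k ≠ 0) ∧
  (∀ k : ℕ, f k * f (k + 2) ≤ (f (k + 1)) ^ 2) ∧
  (∀ N : ℕ, f N = 0 → (∀ i : ℕ, f (N + i) = 0) ∨ (∀ i : ℕ, i ≤ N → f (N - i) = 0))

/-- A nonnegative, not identically zero real sequence is log-convex if
`f (k+1) ^ 2 ≤ f k * f (k+2)` for all `k`. -/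
def IsLogConvexSeq (f : ℕ → ℝ) : Prop :=
  (∀ k, 0 ≤ f k) ∧ (∃ k, f k ≠ 0) ∧
  (∀ k : ℕ, (f (k + 1)) ^ 2 ≤ f k * f (k + 2))

/-- The finite sequence `A 0, …, A M` has no more than one change of sign:
pattern `(-- ⋯ -- 0 ⋯ 0 ++ ⋯ ++)`, any part possibly missing. -/
def OneSignChange (A : ℕ → ℝ) (M : ℕ) : Prop :=
  ∃ p q : ℕ, p ≤ q ∧ q ≤ M + 1 ∧
    (∀ k, k < p → A k < 0) ∧
    (∀ k, p ≤ k → k < q → A k = 0) ∧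
    (∀ k, q ≤ k → k ≤ M → 0 < A k)

private lemma ratio_step_concave (f : ℕ → ℝ) (hc : ∀ k, f k * f (k + 2) ≤ (f (k + 1)) ^ 2)
    (k : ℕ) : ∀ d : ℕ, (∀ j, k ≤ j → j ≤ k + d + 1 → 0 < f j) →
    f k * f (k + d + 1) ≤ f (k + 1) * f (k + d) := by
  intro d
  induction d with
  | zero => intro _; simp [mul_comm]
  | succ d ih =>
    intro hpos
    have ih' := ih (fun j hj hj' => hpos j hj (by omega))
    have h1 := hc (k + d)
    have hkd : 0 < f (k + d) := hpos _ (by omega) (by omega)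
    have hkd1 : 0 < f (k + d + 1) := hpos _ (by omega) (by omega)
    have hk : 0 ≤ f k := (hpos k le_rfl (by omega)).le
    rw [show k + (d + 1) + 1 = k + d + 2 from by omega, show k + (d + 1) = k + d + 1 from by omega]
    nlinarith [mul_le_mul_of_nonneg_left h1 hk, mul_le_mul_of_nonneg_right ih' hkd1.le]

private lemma step_concave (f : ℕ → ℝ) (hf : IsLogConcaveSeq f) (n k : ℕ)
    (h : 2 * (k + 1) ≤ n) :
    f k * f (n - k) ≤ f (k + 1) * f (n - (k + 1)) := by
  obtain ⟨hnn, -, hc, hsupp⟩ := hf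
  rcases eq_or_lt_of_le (hnn k) with h0 | hk
  · rw [← h0]; simpa using mul_nonneg (hnn (k + 1)) (hnn (n - (k + 1)))
  rcases eq_or_lt_of_le (hnn (n - k)) with h0 | hnk
  · rw [← h0]; simpa using mul_nonneg (hnn (k + 1)) (hnn (n - (k + 1)))
  have hpos : ∀ j, k ≤ j → j ≤ n - k → 0 < f j := by
    intro j hj hj'
    rcases (hnn j).lt_or_eq with hlt | heq
    · exact hlt
    exfalso
    rcases hsupp j heq.symm with h1 | h1
    · have := h1 (n - k - j)
      rw [show j + (n - k - j) = n - k from by omega] at this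
      exact hnk.ne' this
    · have := h1 (j - k) (by omega)
      rw [show j - (j - k) = k from by omega] at this
      exact hk.ne' this
  have key := ratio_step_concave f hc k (n - 2 * k - 1)
    (fun j hj hj' => hpos j hj (by omega))
  rw [show k + (n - 2 * k - 1) + 1 = n - k from by omega,
      show k + (n - 2 * k - 1) = n - (k + 1) from by omega] at key
  exact key

private lemma mono_concave (f : ℕ → ℝ) (hf : IsLogConcaveSeq f) (n : ℕ) :
    ∀ i j, i ≤ j → j ≤ n / 2 → f i * f (n - i) ≤ f j * f (n - j) := by
  intro i j hij
  induction j, hij using Nat.le_induction with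
  | base => intro _; exact le_rfl
  | succ j hj ih =>
    intro hj2
    exact le_trans (ih (by omega)) (step_concave f hf n j (by omega))

private lemma ratio_step_convex (f : ℕ → ℝ) (hc : ∀ k, (f (k + 1)) ^ 2 ≤ f k * f (k + 2))
    (hpos : ∀ k, 0 < f k) (k : ℕ) : ∀ d : ℕ,
    f (k + 1) * f (k + d) ≤ f k * f (k + d + 1) := by
  intro d
  induction d with
  | zero => simp [mul_comm]
  | succ d ih =>
    have h1 := hc (k + d)
    have hkd := hpos (k + d)
    have hkd1 := hpos (k + d + 1)
    have hk := hpos k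
    rw [show k + (d + 1) + 1 = k + d + 2 from by omega, show k + (d + 1) = k + d + 1 from by omega]
    nlinarith [mul_le_mul_of_nonneg_left h1 hk.le, mul_le_mul_of_nonneg_right ih hkd1.le]

private lemma convex_dichotomy (f : ℕ → ℝ) (hf : IsLogConvexSeq f) :
    (∀ k, 0 < f k) ∨ (∀ k, 1 ≤ k → f k = 0) := by
  obtain ⟨hnn, -, hc⟩ := hf
  by_cases h : ∀ k, 0 < f k
  · exact Or.inl h
  right
  push_neg at h
  obtain ⟨j, hj⟩ := h
  have hj0 : f j = 0 := le_antisymm hj (hnn j)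
  have sq_zero : ∀ m, f m * f (m + 2) ≤ 0 → f (m + 1) = 0 := by
    intro m hm
    have := le_antisymm (le_trans (hc m) hm) (sq_nonneg _)
    exact pow_eq_zero_iff (n := 2) (by norm_num) |>.mp this
  have fwd : ∀ i, f (j + i) = 0 := by
    intro i
    induction i with
    | zero => simpa using hj0
    | succ i ih =>
      have := sq_zero (j + i) (by rw [ih]; simp)
      simpa [show j + (i + 1) = j + i + 1 from by omega] using this
  have back : ∀ d, d + 1 ≤ j → f (j - d) = 0 := by
    intro d
    induction d with
    | zero => intro _; simpa using hj0
    | succ d ih =>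
      intro hd
      have ihv : f (j - d) = 0 := ih (by omega)
      have := sq_zero (j - (d + 2)) (by
        rw [show j - (d + 2) + 2 = j - d from by omega, ihv]; simp)
      rwa [show j - (d + 2) + 1 = j - (d + 1) from by omega] at this
  intro k hk
  rcases le_or_gt j k with hjk | hjk
  · have := fwd (k - j)
    rwa [show j + (k - j) = k from by omega] at this
  · have := back (j - k) (by omega)
    rwa [show j - (j - k) = k from by omega] at this

private lemma anti_convex (f : ℕ → ℝ) (hc : ∀ k, (f (k + 1)) ^ 2 ≤ f k * f (k + 2))
    (hpos : ∀ k, 0 < f k) (n : ℕ) :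
    ∀ i j, i ≤ j → j ≤ n / 2 → f j * f (n - j) ≤ f i * f (n - i) := by
  intro i j hij
  induction j, hij using Nat.le_induction with
  | base => intro _; exact le_rfl
  | succ j hj ih =>
    intro hj2
    refine le_trans ?_ (ih (by omega))
    have key := ratio_step_convex f hc hpos j (n - 2 * j - 1)
    rw [show j + (n - 2 * j - 1) + 1 = n - j from by omega,
        show j + (n - 2 * j - 1) = n - (j + 1) from by omega] at key
    exact key

theorem stmt_1 (f A : ℕ → ℝ) (n : ℕ) (hn : 1 ≤ n)
    (hsign : OneSignChange A (n / 2)) :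
    (IsLogConcaveSeq f → 0 ≤ ∑ k ∈ Finset.range (n / 2 + 1), A k →
      0 ≤ ∑ k ∈ Finset.range (n / 2 + 1), f k * f (n - k) * A k) ∧
    (IsLogConvexSeq f → (∑ k ∈ Finset.range (n / 2 + 1), A k) ≤ 0 →
      (∑ k ∈ Finset.range (n / 2 + 1), f k * f (n - k) * A k) ≤ 0) := by
  obtain ⟨p, q, hpq, hqM, hp, hpq0, hq⟩ := hsign
  constructor
  · intro hf hA
    have hnn := hf.1
    set m := min q (n / 2) with hm
    have hmM : m ≤ n / 2 := min_le_right _ _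
    have key : ∀ k ∈ Finset.range (n / 2 + 1),
        f m * f (n - m) * A k ≤ f k * f (n - k) * A k := by
      intro k hk
      simp only [Finset.mem_range] at hk
      have hkM : k ≤ n / 2 := by omega
      rcases lt_or_ge k p with h1 | h1
      · have hAk := hp k h1
        have hgk : f k * f (n - k) ≤ f m * f (n - m) :=
          mono_concave f hf n k m (by omega) hmM
        exact mul_le_mul_of_nonpos_right hgk hAk.le
      rcases lt_or_ge k q with h2 | h2
      · rw [hpq0 k h1 h2]; simp
      · have hAk := hq k h2 hkM
        have hgk : f m * f (n - m) ≤ f k * f (n - k) :=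
          mono_concave f hf n m k (by omega) hkM
        exact mul_le_mul_of_nonneg_right hgk hAk.le
    calc (0:ℝ) ≤ f m * f (n - m) * ∑ k ∈ Finset.range (n / 2 + 1), A k :=
          mul_nonneg (mul_nonneg (hnn m) (hnn (n - m))) hA
      _ = ∑ k ∈ Finset.range (n / 2 + 1), f m * f (n - m) * A k := by
          rw [Finset.mul_sum]
      _ ≤ ∑ k ∈ Finset.range (n / 2 + 1), f k * f (n - k) * A k :=
          Finset.sum_le_sum key
  · intro hf hA
    have hnn := hf.1
    rcases convex_dichotomy f hf with hpos | hzero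
    · set m := min q (n / 2) with hm
      have hmM : m ≤ n / 2 := min_le_right _ _
      have hc := hf.2.2
      have key : ∀ k ∈ Finset.range (n / 2 + 1),
          f k * f (n - k) * A k ≤ f m * f (n - m) * A k := by
        intro k hk
        simp only [Finset.mem_range] at hk
        have hkM : k ≤ n / 2 := by omega
        rcases lt_or_ge k p with h1 | h1
        · have hAk := hp k h1
          have hgk : f m * f (n - m) ≤ f k * f (n - k) :=
            anti_convex f hc hpos n k m (by omega) hmM
          exact mul_le_mul_of_nonpos_right hgk hAk.le
        rcases lt_or_ge k q with h2 | h2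
        · rw [hpq0 k h1 h2]; simp
        · have hAk := hq k h2 hkM
          have hgk : f k * f (n - k) ≤ f m * f (n - m) :=
            anti_convex f hc hpos n m k (by omega) hkM
          exact mul_le_mul_of_nonneg_right hgk hAk.le
      calc ∑ k ∈ Finset.range (n / 2 + 1), f k * f (n - k) * A k
          ≤ ∑ k ∈ Finset.range (n / 2 + 1), f m * f (n - m) * A k :=
            Finset.sum_le_sum key
        _ = f m * f (n - m) * ∑ k ∈ Finset.range (n / 2 + 1), A k := by
            rw [Finset.mul_sum]
        _ ≤ 0 := mul_nonpos_of_nonneg_of_nonpos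
            (mul_nonneg (hnn m) (hnn (n - m))) hA
    · have : ∑ k ∈ Finset.range (n / 2 + 1), f k * f (n - k) * A k = 0 := by
        apply Finset.sum_eq_zero
        intro k hk
        rcases Nat.eq_zero_or_pos k with rfl | hk1
        · rw [show n - 0 = n from rfl, hzero n hn]; ring
        · rw [hzero k hk1]; ring
      rw [this]
end

section
/- Let f : [0,∞) → (0,∞) be a positive function satisfying the Turán type inequality f(μ+1)^2 ≥ f(μ)f(μ+2) for all μ ≥ 0. Then f(μ+α)f(μ+β) ≥ f(μ)f(μ+α+β) for all positive integers α, β and all μ ≥ 0. (The same statement holds with all inequalities reversed.) -/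
lemma stepA (f : ℝ → ℝ) (hpos : ∀ μ : ℝ, 0 ≤ μ → 0 < f μ)
    (h : ∀ μ : ℝ, 0 ≤ μ → f μ * f (μ + 2) ≤ f (μ + 1) ^ 2) :
    ∀ n : ℕ, ∀ μ : ℝ, 0 ≤ μ → f μ * f (μ + n + 1) ≤ f (μ + 1) * f (μ + n) := by
  intro n
  induction n with
  | zero => intro μ hμ; norm_num; nlinarith [hpos μ hμ, hpos (μ+1) (by linarith)]
  | succ n ih =>
    intro μ hμ
    have ihμ := ih μ hμ
    have hn := h (μ + n) (by positivity)
    have e1 : μ + n + 2 = μ + (n+1:ℕ) + 1 := by push_cast; ring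
    have e2 : μ + n + 1 + 1 = μ + n + 2 := by ring
    have e3 : (μ:ℝ) + (n+1:ℕ) = μ + n + 1 := by push_cast; ring
    rw [e1, e3] at hn
    rw [e3]
    have p0 := hpos μ hμ
    have p1 := hpos (μ+1) (by linarith)
    have p2 := hpos (μ+n) (by positivity)
    have p3 := hpos (μ+n+1) (by positivity)
    have p4 := hpos (μ+(n+1:ℕ)+1) (by positivity)
    nlinarith [mul_le_mul_of_nonneg_left hn p0.le, mul_le_mul_of_nonneg_right ihμ p3.le]

lemma mainA (f : ℝ → ℝ) (hpos : ∀ μ : ℝ, 0 ≤ μ → 0 < f μ)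
    (h : ∀ μ : ℝ, 0 ≤ μ → f μ * f (μ + 2) ≤ f (μ + 1) ^ 2) :
    ∀ (α β : ℕ), ∀ μ : ℝ, 0 ≤ μ → f μ * f (μ + α + β) ≤ f (μ + α) * f (μ + β) := by
  intro α
  induction α with
  | zero => intro β μ hμ; norm_num
  | succ α ih =>
    intro β μ hμ
    have ihμ := ih β μ hμ
    have hs := stepA f hpos h β (μ + α) (by positivity)
    have e1 : (μ:ℝ) + (α+1:ℕ) + β = μ + α + β + 1 := by push_cast; ring
    have e2 : (μ:ℝ) + (α+1:ℕ) = μ + α + 1 := by push_cast; ring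
    have e3 : μ + α + (β:ℝ) + 1 = μ + α + β + 1 := by ring
    rw [e1, e2]
    rw [e3] at hs
    have p0 := hpos μ hμ
    have p1 := hpos (μ+α) (by positivity)
    have p2 := hpos (μ+β) (by positivity)
    have p3 := hpos (μ+α+1) (by positivity)
    have p4 := hpos (μ+α+β) (by positivity)
    have p5 := hpos (μ+α+β+1) (by positivity)
    nlinarith [mul_le_mul_of_nonneg_left hs p0.le, mul_le_mul_of_nonneg_right ihμ p5.le]

theorem stmt_2 (f : ℝ → ℝ) (hpos : ∀ μ : ℝ, 0 ≤ μ → 0 < f μ) :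
    ((∀ μ : ℝ, 0 ≤ μ → f μ * f (μ + 2) ≤ f (μ + 1) ^ 2) →
      ∀ (α β : ℕ), 1 ≤ α → 1 ≤ β → ∀ μ : ℝ, 0 ≤ μ →
        f μ * f (μ + α + β) ≤ f (μ + α) * f (μ + β)) ∧
    ((∀ μ : ℝ, 0 ≤ μ → f (μ + 1) ^ 2 ≤ f μ * f (μ + 2)) →
      ∀ (α β : ℕ), 1 ≤ α → 1 ≤ β → ∀ μ : ℝ, 0 ≤ μ →
        f (μ + α) * f (μ + β) ≤ f μ * f (μ + α + β)) := by
  constructor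
  · intro h α β _ _ μ hμ
    exact mainA f hpos h α β μ hμ
  · intro h α β _ _ μ hμ
    have hpos' : ∀ μ : ℝ, 0 ≤ μ → 0 < (f μ)⁻¹ := fun μ hμ => inv_pos.2 (hpos μ hμ)
    have h' : ∀ μ : ℝ, 0 ≤ μ → (f μ)⁻¹ * (f (μ + 2))⁻¹ ≤ ((f (μ + 1))⁻¹) ^ 2 := by
      intro ν hν
      have p0 := hpos ν hν
      have p1 := hpos (ν+1) (by linarith)
      have p2 := hpos (ν+2) (by linarith)
      rw [← mul_inv, inv_pow, inv_le_inv₀ (by positivity) (by positivity)]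
      exact h ν hν
    have := mainA (fun x => (f x)⁻¹) (fun μ hμ => inv_pos.2 (hpos μ hμ)) h' α β μ hμ
    have p0 := hpos μ hμ
    have p1 := hpos (μ+α) (by positivity)
    have p2 := hpos (μ+β) (by positivity)
    have p3 := hpos (μ+α+β) (by positivity)
    rw [← mul_inv, ← mul_inv, inv_le_inv₀ (by positivity) (by positivity)] at this
    exact this
end

section
/- Let a_n(μ) (n ≥ 0, μ ≥ 0) be a family of real coefficients and fix a positive integer n₀. Suppose that for all μ ≥ 0, all integers β ∈ {1, 2, …, n₀}, and all m ≥ 0 one has δ_m(μ, 1, β) ≥ 0 (respectively, ≤ 0). Then for all μ ≥ 0, all positive integers α, β with α + β ≤ n₀ + 1, and all m ≥ 0 one has δ_m(μ, α, β) ≥ 0 (respectively, ≤ 0). -/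
/-- The `m`-th power series coefficient of the generalized Turánian
`f(μ+α;x)f(μ+β;x) − f(μ;x)f(μ+α+β;x)` of `f(μ;x) = Σ_{n≥0} a n μ * x^n`. -/
def turanCoeff (a : ℕ → ℝ → ℝ) (m : ℕ) (μ α β : ℝ) : ℝ :=
  ∑ k ∈ Finset.range (m + 1),
    (a k (μ + α) * a (m - k) (μ + β) - a k μ * a (m - k) (μ + α + β))

lemma turanCoeff_symm (a : ℕ → ℝ → ℝ) (m : ℕ) (μ α β : ℝ) :
    turanCoeff a m μ α β = turanCoeff a m μ β α := by
  unfold turanCoeff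
  rw [Finset.sum_sub_distrib, Finset.sum_sub_distrib]
  congr 1
  · rw [← Finset.sum_range_reflect]
    apply Finset.sum_congr rfl
    intro k hk
    have hk' : k ≤ m := Nat.lt_succ_iff.mp (Finset.mem_range.mp hk)
    have h1 : m + 1 - 1 - k = m - k := by omega
    have h2 : m - (m - k) = k := by omega
    rw [h1, h2]
    ring
  · apply Finset.sum_congr rfl
    intro k _
    have h3 : μ + β + α = μ + α + β := by ring
    rw [h3]

lemma turanCoeff_key (a : ℕ → ℝ → ℝ) (m : ℕ) (μ α β : ℝ) :
    turanCoeff a m μ α β =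
      turanCoeff a m (μ + 1) (α - 1) (β - 1) + turanCoeff a m μ 1 (α + β - 1) := by
  unfold turanCoeff
  rw [← Finset.sum_add_distrib]
  apply Finset.sum_congr rfl
  intro k _
  have h1 : μ + 1 + (α - 1) = μ + α := by ring
  have h2 : μ + 1 + (β - 1) = μ + β := by ring
  have h3 : μ + 1 + (α - 1) + (β - 1) = μ + 1 + (α + β - 1) - 1 + 1 - 1 := by ring
  have h4 : μ + 1 + (α - 1) + (β - 1) = μ + (α + β - 1) := by ring
  have h5 : μ + 1 + (α + β - 1) = μ + α + β := by ring
  have h4' : μ + α + (β - 1) = μ + (α + β - 1) := by ring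
  rw [h1, h2, h4', h5]
  ring

lemma turanCoeff_core (a : ℕ → ℝ → ℝ) (n₀ : ℕ) (P : ℝ → Prop)
    (Padd : ∀ x y, P x → P y → P (x + y))
    (h : ∀ μ : ℝ, 0 ≤ μ → ∀ β : ℕ, 1 ≤ β → β ≤ n₀ → ∀ m : ℕ,
        P (turanCoeff a m μ 1 (β : ℝ))) :
    ∀ α : ℕ, ∀ μ : ℝ, 0 ≤ μ → ∀ β : ℕ, 1 ≤ α → 1 ≤ β → α + β ≤ n₀ + 1 → ∀ m : ℕ,
        P (turanCoeff a m μ (α : ℝ) (β : ℝ)) := by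
  intro α
  induction α with
  | zero => intro μ _ β hα; omega
  | succ n ih =>
    intro μ hμ β hα hβ hsum m
    rcases Nat.eq_zero_or_pos n with hn | hn
    · subst hn
      simpa using h μ hμ β hβ (by omega) m
    rcases Nat.lt_or_ge β 2 with hβ2 | hβ2
    · -- β = 1
      have hβ1 : β = 1 := by omega
      subst hβ1
      rw [turanCoeff_symm]
      simpa using h μ hμ (n + 1) (by omega) (by omega) m
    · have key := turanCoeff_key a m μ ((n + 1 : ℕ) : ℝ) ((β : ℕ) : ℝ)
      have e1 : ((n + 1 : ℕ) : ℝ) - 1 = ((n : ℕ) : ℝ) := by push_cast; ring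
      have e2 : ((β : ℕ) : ℝ) - 1 = ((β - 1 : ℕ) : ℝ) := by
        have : (1:ℕ) ≤ β := hβ
        push_cast [this]; ring
      have e3 : ((n + 1 : ℕ) : ℝ) + ((β : ℕ) : ℝ) - 1 = ((n + β : ℕ) : ℝ) := by
        push_cast; ring
      rw [e1, e2, e3] at key
      rw [key]
      exact Padd _ _
        (ih (μ + 1) (by linarith) (β - 1) hn (by omega) (by omega) m)
        (h μ hμ (n + β) (by omega) (by omega) m)

theorem stmt_3 (a : ℕ → ℝ → ℝ) (n₀ : ℕ) (hn₀ : 1 ≤ n₀) :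
    ((∀ μ : ℝ, 0 ≤ μ → ∀ β : ℕ, 1 ≤ β → β ≤ n₀ → ∀ m : ℕ,
        0 ≤ turanCoeff a m μ 1 (β : ℝ)) →
      ∀ μ : ℝ, 0 ≤ μ → ∀ α β : ℕ, 1 ≤ α → 1 ≤ β → α + β ≤ n₀ + 1 → ∀ m : ℕ,
        0 ≤ turanCoeff a m μ (α : ℝ) (β : ℝ)) ∧
    ((∀ μ : ℝ, 0 ≤ μ → ∀ β : ℕ, 1 ≤ β → β ≤ n₀ → ∀ m : ℕ,
        turanCoeff a m μ 1 (β : ℝ) ≤ 0) →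
      ∀ μ : ℝ, 0 ≤ μ → ∀ α β : ℕ, 1 ≤ α → 1 ≤ β → α + β ≤ n₀ + 1 → ∀ m : ℕ,
        turanCoeff a m μ (α : ℝ) (β : ℝ) ≤ 0) := by
  constructor
  · intro h μ hμ α β hα hβ hsum m
    exact turanCoeff_core a n₀ (fun x => 0 ≤ x)
      (fun x y hx hy => by positivity) h α μ hμ β hα hβ hsum m
  · intro h μ hμ α β hα hβ hsum m
    exact turanCoeff_core a n₀ (fun x => x ≤ 0)
      (fun x y hx hy => by linarith) h α μ hμ β hα hβ hsum m
end

section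
/- Let k and m be nonnegative integers with 1 ≤ k ≤ m/2, let μ ≥ 0 and α, β > 0 be real numbers, and set T_{k,m} := (μ+α)_k (μ+β)_{m−k} + (μ+α)_{m−k} (μ+β)_k − (μ)_k (μ+α+β)_{m−k} − (μ)_{m−k} (μ+α+β)_k. If T_{k,m} ≤ 0, then T_{k−1,m} < 0. -/
/-- The rising factorial (Pochhammer symbol) `(μ)_n = μ(μ+1)⋯(μ+n−1)`. -/
noncomputable def risingFactorial (μ : ℝ) : ℕ → ℝ
  | 0 => 1
  | n + 1 => risingFactorial μ n * (μ + n)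

lemma rf_nonneg {x : ℝ} (hx : 0 ≤ x) (n : ℕ) : 0 ≤ risingFactorial x n := by
  induction n with
  | zero => norm_num [risingFactorial]
  | succ n ih =>
    rw [risingFactorial]
    exact mul_nonneg ih (by positivity)

lemma rf_pos {x : ℝ} (hx : 0 < x) (n : ℕ) : 0 < risingFactorial x n := by
  induction n with
  | zero => norm_num [risingFactorial]
  | succ n ih =>
    rw [risingFactorial]
    exact mul_pos ih (by positivity)

lemma rf_mono {x y : ℝ} (hx : 0 ≤ x) (hxy : x ≤ y) (n : ℕ) :
    risingFactorial x n ≤ risingFactorial y n := by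
  induction n with
  | zero => norm_num [risingFactorial]
  | succ n ih =>
    rw [risingFactorial, risingFactorial]
    have h1 : (0:ℝ) ≤ x + n := by positivity
    have := rf_nonneg hx n
    nlinarith [rf_nonneg (le_trans hx hxy) n]

lemma rf_strict_mono {x y : ℝ} (hx : 0 ≤ x) (hxy : x < y) {n : ℕ} (hn : 1 ≤ n) :
    risingFactorial x n < risingFactorial y n := by
  induction n with
  | zero => omega
  | succ n ih =>
    rw [risingFactorial, risingFactorial]
    rcases Nat.eq_zero_or_pos n with h | h
    · subst h; norm_num [risingFactorial]; linarith
    · have h1 := ih h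
      have h2 : (0:ℝ) < y + n := by
        have : (0:ℝ) ≤ (n:ℝ) := Nat.cast_nonneg n
        linarith
      have h3 := rf_nonneg hx n
      have h4 : (0:ℝ) ≤ x + n := by positivity
      have h5 := rf_pos (lt_of_le_of_lt hx hxy) n
      nlinarith

lemma rf_add (x : ℝ) (j t : ℕ) :
    risingFactorial x (j + t) = risingFactorial x j * risingFactorial (x + j) t := by
  induction t with
  | zero => norm_num [risingFactorial]
  | succ t ih =>
    have : j + (t + 1) = (j + t) + 1 := by omega
    rw [this, risingFactorial, ih, risingFactorial]
    push_cast
    ring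

lemma pair_le (μ α β : ℝ) (hμ : 0 ≤ μ) (hα : 0 ≤ α) (hβ : 0 ≤ β) (j : ℕ) :
    risingFactorial μ j * risingFactorial (μ + α + β) j ≤
      risingFactorial (μ + α) j * risingFactorial (μ + β) j := by
  induction j with
  | zero => norm_num [risingFactorial]
  | succ j ih =>
    rw [risingFactorial, risingFactorial, risingFactorial, risingFactorial]
    have hj : (0:ℝ) ≤ (j:ℝ) := Nat.cast_nonneg j
    have h1 := rf_nonneg hμ j
    have h2 := rf_nonneg (by linarith : (0:ℝ) ≤ μ + α + β) j
    have h3 := rf_nonneg (by linarith : (0:ℝ) ≤ μ + α) j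
    have h4 := rf_nonneg (by linarith : (0:ℝ) ≤ μ + β) j
    have hpair : (μ + j) * (μ + α + β + j) ≤ (μ + α + j) * (μ + β + j) := by nlinarith
    have hp : (0:ℝ) ≤ (μ + j) * (μ + α + β + j) := by positivity
    nlinarith [mul_le_mul_of_nonneg_right ih hp,
      mul_le_mul_of_nonneg_left hpair (mul_nonneg h3 h4)]

/-- Key: `(μ)_n (μ+α+β)_j < (μ+α)_j (μ+β)_n` for `j < n`. -/
lemma key (μ α β : ℝ) (hμ : 0 ≤ μ) (hα : 0 < α) (hβ : 0 < β) (j n : ℕ) (hjn : j < n) :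
    risingFactorial μ n * risingFactorial (μ + α + β) j <
      risingFactorial (μ + α) j * risingFactorial (μ + β) n := by
  obtain ⟨t, rfl⟩ : ∃ t, n = j + t := ⟨n - j, by omega⟩
  have ht : 1 ≤ t := by omega
  rw [rf_add μ j t, rf_add (μ + β) j t]
  have hAB : 0 < risingFactorial (μ + α) j * risingFactorial (μ + β) j :=
    mul_pos (rf_pos (by linarith) j) (rf_pos (by linarith) j)
  have hCD := pair_le μ α β hμ hα.le hβ.le j
  have hj : (0:ℝ) ≤ (j:ℝ) := Nat.cast_nonneg j
  have hmono : risingFactorial (μ + j) t < risingFactorial (μ + β + j) t :=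
    rf_strict_mono (by linarith) (by linarith) ht
  have h0 := rf_nonneg (by linarith : (0:ℝ) ≤ μ + j) t
  have hCDnn : 0 ≤ risingFactorial μ j * risingFactorial (μ + α + β) j :=
    mul_nonneg (rf_nonneg hμ j) (rf_nonneg (by linarith) j)
  nlinarith

theorem stmt_5 (k m : ℕ) (hk : 1 ≤ k) (hkm : 2 * k ≤ m) (μ α β : ℝ)
    (hμ : 0 ≤ μ) (hα : 0 < α) (hβ : 0 < β)
    (hT : risingFactorial (μ + α) k * risingFactorial (μ + β) (m - k)
        + risingFactorial (μ + α) (m - k) * risingFactorial (μ + β) k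
        - risingFactorial μ k * risingFactorial (μ + α + β) (m - k)
        - risingFactorial μ (m - k) * risingFactorial (μ + α + β) k ≤ 0) :
    risingFactorial (μ + α) (k - 1) * risingFactorial (μ + β) (m - (k - 1))
        + risingFactorial (μ + α) (m - (k - 1)) * risingFactorial (μ + β) (k - 1)
        - risingFactorial μ (k - 1) * risingFactorial (μ + α + β) (m - (k - 1))
        - risingFactorial μ (m - (k - 1)) * risingFactorial (μ + α + β) (k - 1) < 0 := by
  obtain ⟨j, rfl⟩ : ∃ j, k = j + 1 := ⟨k - 1, by omega⟩
  set n := m - (j + 1) with hn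
  have h1 : j + 1 - 1 = j := by omega
  have h2 : m - (j + 1 - 1) = n + 1 := by omega
  have hjn : j < n := by omega
  rw [h1, show m - j = n + 1 by omega]
  rw [show risingFactorial (μ + α) (j+1) = risingFactorial (μ + α) j * (μ + α + j) from rfl,
      show risingFactorial (μ + β) (j+1) = risingFactorial (μ + β) j * (μ + β + j) from rfl,
      show risingFactorial μ (j+1) = risingFactorial μ j * (μ + j) from rfl,
      show risingFactorial (μ + α + β) (j+1)
        = risingFactorial (μ + α + β) j * (μ + α + β + j) from rfl] at hT
  rw [show risingFactorial (μ + α) (n+1) = risingFactorial (μ + α) n * (μ + α + n) from rfl,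
      show risingFactorial (μ + β) (n+1) = risingFactorial (μ + β) n * (μ + β + n) from rfl,
      show risingFactorial μ (n+1) = risingFactorial μ n * (μ + n) from rfl,
      show risingFactorial (μ + α + β) (n+1)
        = risingFactorial (μ + α + β) n * (μ + α + β + n) from rfl]
  set Aj := risingFactorial (μ + α) j
  set An := risingFactorial (μ + α) n
  set Bj := risingFactorial (μ + β) j
  set Bn := risingFactorial (μ + β) n
  set Cj := risingFactorial μ j
  set Cn := risingFactorial μ n
  set Dj := risingFactorial (μ + α + β) j
  set Dn := risingFactorial (μ + α + β) n
  have hP : Cn * Dj < Aj * Bn := key μ α β hμ hα hβ j n hjn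
  have hQ : Cn * Dj < An * Bj := by
    have := key μ β α hμ hβ hα j n hjn
    rw [show μ + β + α = μ + α + β by ring] at this
    simpa [mul_comm] using this
  have hjc : (0:ℝ) ≤ (j:ℝ) := Nat.cast_nonneg j
  have hnc : (0:ℝ) ≤ (n:ℝ) := Nat.cast_nonneg n
  -- G > 0
  have hG : 0 < α * (Aj * Bn) + β * (An * Bj) - (α + β) * (Cn * Dj) := by nlinarith
  set X := Aj * (Bn * (μ + β + n)) + An * (μ + α + n) * Bj
      - Cj * (Dn * (μ + α + β + n)) - Cn * (μ + n) * Dj with hX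
  set Y := Aj * (μ + α + j) * Bn + An * (Bj * (μ + β + j))
      - Cj * (μ + j) * Dn - Cn * (Dj * (μ + α + β + j)) with hY
  have hYle : Y ≤ 0 := by rw [hY]; linarith [hT]
  have hid : (μ + j) * X = (μ + α + β + n) * Y
      - (2*μ + α + β + j + n) * (α * (Aj * Bn) + β * (An * Bj) - (α + β) * (Cn * Dj)) := by
    rw [hX, hY]; ring
  have hZ : (0:ℝ) < μ + α + β + n := by linarith
  have hσ : (0:ℝ) < 2*μ + α + β + j + n := by linarith
  have hneg : (μ + j) * X < 0 := by
    have h5 : (μ + α + β + n) * Y ≤ 0 := mul_nonpos_of_nonneg_of_nonpos hZ.le hYle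
    nlinarith
  have hμj : (0:ℝ) ≤ μ + j := by linarith
  nlinarith [hneg, hμj]
end

section
/- For every integer m ≥ 1, every real μ ≥ 0, and all real α, β > 0, Σ_{k=0}^{m} [ (μ+α)_{2k}(μ+β)_{2(m−k)} − (μ)_{2k}(μ+α+β)_{2(m−k)} ] / ( (2k)! (2(m−k))! ) < 0. Equivalently, the function ψ(μ;x) = Σ_{n≥0} (μ)_{2n} x^n/(2n)! is coefficient-wise log-convex in μ with strictly negative Turánian coefficients. -/
namespace Stmt8Aux

open PowerSeries Finset

lemma rf_nonneg {a : ℝ} (ha : 0 ≤ a) : ∀ n, 0 ≤ risingFactorial a n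
  | 0 => by simp [risingFactorial]
  | n + 1 => by
      have := rf_nonneg ha n
      have hn : (0:ℝ) ≤ a + n := by positivity
      simpa [risingFactorial] using mul_nonneg this hn

lemma rf_pos {a : ℝ} (ha : 0 < a) : ∀ n, 0 < risingFactorial a n
  | 0 => by simp [risingFactorial]
  | n + 1 => by
      have := rf_pos ha n
      have hn : (0:ℝ) < a + n := by positivity
      simpa [risingFactorial] using mul_pos this hn

lemma rf_shift (a : ℝ) : ∀ n, risingFactorial a (n + 1) = a * risingFactorial (a + 1) n
  | 0 => by simp [risingFactorial]
  | n + 1 => by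
      show risingFactorial a (n + 1) * (a + ((n + 1 : ℕ) : ℝ)) =
        a * (risingFactorial (a + 1) n * ((a + 1) + (n : ℝ)))
      rw [rf_shift a n]
      push_cast
      ring

/-- `c a n` is the `n`-th Taylor coefficient of `(1-x)^{-a}`. -/
noncomputable def c (a : ℝ) (n : ℕ) : ℝ := risingFactorial a n / n.factorial

lemma c_zero (a : ℝ) : c a 0 = 1 := by simp [c, risingFactorial]

lemma fact_ne (n : ℕ) : ((n.factorial : ℝ)) ≠ 0 := by
  exact_mod_cast n.factorial_ne_zero

lemma c_recur (a : ℝ) (n : ℕ) : ((n:ℝ) + 1) * c a (n + 1) = (a + n) * c a n := by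
  simp only [c, risingFactorial, Nat.factorial_succ]
  push_cast
  field_simp

lemma c_shift (a : ℝ) (n : ℕ) : ((n:ℝ) + 1) * c a (n + 1) = a * c (a + 1) n := by
  simp only [c, rf_shift, Nat.factorial_succ]
  push_cast
  field_simp

lemma c_nonneg {a : ℝ} (ha : 0 ≤ a) (n : ℕ) : 0 ≤ c a n := by
  have := rf_nonneg ha n
  have h2 : (0:ℝ) < n.factorial := by exact_mod_cast n.factorial_pos
  exact div_nonneg this h2.le

lemma c_pos {a : ℝ} (ha : 0 < a) (n : ℕ) : 0 < c a n := by
  have := rf_pos ha n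
  have h2 : (0:ℝ) < n.factorial := by exact_mod_cast n.factorial_pos
  exact div_pos this h2

/-- `(1-x)^{-a}` as a formal power series. -/
noncomputable def f (a : ℝ) : PowerSeries ℝ := PowerSeries.mk (c a)

/-- `(1+x)^{-a}` as a formal power series. -/
noncomputable def fb (a : ℝ) : PowerSeries ℝ := PowerSeries.mk (fun n => (-1)^n * c a n)

@[simp] lemma coeff_f (a : ℝ) (n : ℕ) : coeff n (f a) = c a n := coeff_mk _ _

@[simp] lemma coeff_fb (a : ℝ) (n : ℕ) : coeff n (fb a) = (-1)^n * c a n := coeff_mk _ _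

/-- Vandermonde convolution. -/
lemma vand (a b : ℝ) : ∀ n, (∑ i ∈ range (n + 1), c a i * c b (n - i)) = c (a + b) n := by
  intro n
  induction n with
  | zero => simp [c_zero]
  | succ n ih =>
    have hne : ((n:ℝ) + 1) ≠ 0 := by positivity
    apply mul_left_cancel₀ hne
    rw [c_recur (a + b) n, ← ih]
    rw [Finset.mul_sum]
    have split : ∀ i ∈ range (n + 2),
        ((n:ℝ) + 1) * (c a i * c b (n + 1 - i)) =
          (i:ℝ) * c a i * c b (n + 1 - i)
            + c a i * (((n + 1 - i : ℕ) : ℝ) * c b (n + 1 - i)) := by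
      intro i hi
      have hi' : i ≤ n + 1 := by simpa [Nat.lt_succ_iff] using hi
      have : ((n + 1 - i : ℕ) : ℝ) = (n:ℝ) + 1 - i := by
        push_cast [Nat.cast_sub hi']
        ring
      rw [this]; ring
    rw [Finset.sum_congr rfl split, Finset.sum_add_distrib]
    have e1 : (∑ i ∈ range (n + 2), (i:ℝ) * c a i * c b (n + 1 - i)) =
        ∑ i ∈ range (n + 1), (a + i) * (c a i * c b (n - i)) := by
      rw [Finset.sum_range_succ']
      simp only [Nat.cast_zero, zero_mul, add_zero]
      refine Finset.sum_congr rfl fun i hi => ?_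
      have h1 : n + 1 - (i + 1) = n - i := by omega
      rw [h1]
      push_cast
      linear_combination (c b (n - i)) * c_recur a i
    have e2 : (∑ i ∈ range (n + 2), c a i * (((n + 1 - i : ℕ) : ℝ) * c b (n + 1 - i))) =
        ∑ i ∈ range (n + 1), (b + ((n:ℝ) - i)) * (c a i * c b (n - i)) := by
      rw [Finset.sum_range_succ]
      simp only [Nat.sub_self, Nat.cast_zero, zero_mul, mul_zero, add_zero]
      refine Finset.sum_congr rfl fun i hi => ?_
      have hi' : i ≤ n := by simpa [Nat.lt_succ_iff] using hi
      have h1 : n + 1 - i = (n - i) + 1 := by omega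
      have h2 : ((n - i : ℕ) : ℝ) = (n:ℝ) - i := by push_cast [Nat.cast_sub hi']; ring
      rw [h1]
      push_cast [h2]
      linear_combination (c a i) * c_recur b (n - i)
        + (c a i * (c b (n - i) - c b (n - i + 1))) * h2
    rw [e1, e2, ← Finset.sum_add_distrib, Finset.mul_sum]
    refine Finset.sum_congr rfl fun i hi => ?_
    ring

lemma f_mul (a b : ℝ) : f a * f b = f (a + b) := by
  ext n
  rw [coeff_mul, Finset.Nat.sum_antidiagonal_eq_sum_range_succ_mk]
  simpa using vand a b n

lemma fb_eq (a : ℝ) : fb a = rescale (-1) (f a) := by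
  ext n
  simp [coeff_rescale]

lemma fb_mul (a b : ℝ) : fb a * fb b = fb (a + b) := by
  rw [fb_eq, fb_eq, fb_eq, ← map_mul, f_mul]

lemma f_factor (a : ℝ) : f a = (1 - X) * f (a + 1) := by
  ext n
  rw [sub_mul, one_mul, map_sub]
  cases n with
  | zero => simp [coeff_zero_X_mul, c_zero]
  | succ n =>
    rw [coeff_succ_X_mul, coeff_f, coeff_f, coeff_f]
    have hne : ((n:ℝ) + 1) ≠ 0 := by positivity
    apply mul_left_cancel₀ hne
    linear_combination (c_shift a n) - (c_recur (a + 1) n)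

lemma fb_factor (a : ℝ) : fb a = (1 + X) * fb (a + 1) := by
  have h := congrArg (rescale (-1 : ℝ)) (f_factor a)
  rw [← fb_eq, map_mul, ← fb_eq, map_sub, map_one, rescale_neg_one_X] at h
  rw [h]; ring

lemma deriv_f (a : ℝ) : d⁄dX ℝ (f a) = C a * f (a + 1) := by
  ext n
  rw [coeff_derivative, coeff_C_mul, coeff_f, coeff_f]
  linear_combination c_shift a n

lemma deriv_fb (a : ℝ) : d⁄dX ℝ (fb a) = -(C a * fb (a + 1)) := by
  ext n
  rw [coeff_derivative, map_neg, coeff_C_mul, coeff_fb, coeff_fb]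
  linear_combination ((-1:ℝ)^(n+1)) * c_shift a n

lemma deriv_h (a : ℝ) :
    d⁄dX ℝ (f a * fb a) = C (2 * a) * (X * (f (a + 1) * fb (a + 1))) := by
  rw [Derivation.leibniz, smul_eq_mul, smul_eq_mul, deriv_f, deriv_fb]
  rw [f_factor a, fb_factor a]
  rw [show (2 * a : ℝ) = a + a by ring, map_add]
  ring

lemma h_recur (a : ℝ) (n : ℕ) :
    coeff (n + 1) (f a * fb a) * ((n:ℝ) + 1) =
      2 * a * coeff n (X * (f (a + 1) * fb (a + 1))) := by
  have h := congrArg (coeff n) (deriv_h a)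
  rw [coeff_derivative, coeff_C_mul] at h
  exact h

lemma h_coeff : ∀ k : ℕ, ∀ a : ℝ,
    coeff (2 * k) (f a * fb a) = c a k ∧ coeff (2 * k + 1) (f a * fb a) = 0 := by
  intro k
  induction k with
  | zero =>
    intro a
    constructor
    · simp [coeff_mul, c_zero]
    · have h := h_recur a 0
      rw [coeff_zero_X_mul] at h
      simpa using h
  | succ k ih =>
    intro a
    obtain ⟨ihe, iho⟩ := ih (a + 1)
    constructor
    · have h := h_recur a (2 * k + 1)
      rw [coeff_succ_X_mul, ihe] at h
      rw [show 2 * (k + 1) = (2 * k + 1) + 1 by omega]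
      have hne : (2 * (k:ℝ) + 2) ≠ 0 := by positivity
      apply mul_right_cancel₀ hne
      push_cast at h
      linear_combination h - 2 * c_shift a k
    · have h := h_recur a (2 * k + 2)
      rw [show 2 * k + 2 = (2 * k + 1) + 1 by omega] at h
      rw [coeff_succ_X_mul, iho, mul_zero] at h
      have hne : (((2 * k + 1 + 1 : ℕ)):ℝ) + 1 ≠ 0 := by positivity
      have h0 : coeff (2 * k + 1 + 1 + 1) (f a * fb a) = 0 :=
        (mul_eq_zero.mp h).resolve_right hne
      rw [show 2 * (k + 1) + 1 = 2 * k + 1 + 1 + 1 by omega]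
      exact h0


lemma sum_range_even (G : ℕ → ℝ) (h : ∀ i, G (2 * i + 1) = 0) :
    ∀ m, (∑ i ∈ range (2 * m + 1), G i) = ∑ k ∈ range (m + 1), G (2 * k)
  | 0 => by simp
  | m + 1 => by
      have ih := sum_range_even G h m
      rw [show 2 * (m + 1) + 1 = (2 * m + 1) + 1 + 1 by omega,
        Finset.sum_range_succ, Finset.sum_range_succ, ih, h m,
        Finset.sum_range_succ, show 2 * m + 1 + 1 = 2 * (m + 1) by omega,
        Finset.sum_range_succ, Finset.sum_range_succ]
      ring

lemma bridge (a b : ℝ) (m : ℕ) :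
    coeff (2 * m) ((f a + fb a) * (f b + fb b)) =
      ∑ k ∈ range (m + 1), 4 * (c a (2 * k) * c b (2 * (m - k))) := by
  rw [coeff_mul, Finset.Nat.sum_antidiagonal_eq_sum_range_succ_mk]
  have hodd : ∀ i, (coeff (2 * i + 1)) (f a + fb a)
      * (coeff (2 * m - (2 * i + 1))) (f b + fb b) = 0 := by
    intro i
    have hz : (coeff (2 * i + 1)) (f a + fb a) = 0 := by
      have ho : ((-1:ℝ)) ^ (2 * i + 1) = -1 := Odd.neg_one_pow ⟨i, by omega⟩
      rw [map_add, coeff_f, coeff_fb, ho]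
      ring
    rw [hz, zero_mul]
  rw [sum_range_even _ hodd m]
  refine Finset.sum_congr rfl fun k hk => ?_
  have hk' : k ≤ m := by simpa [Nat.lt_succ_iff] using hk
  have h1 : 2 * m - 2 * k = 2 * (m - k) := by omega
  have e1 : (-1:ℝ) ^ (2 * k) = 1 := by rw [pow_mul]; norm_num
  have e2 : (-1:ℝ) ^ (2 * (m - k)) = 1 := by rw [pow_mul]; norm_num
  rw [h1, map_add, map_add, coeff_f, coeff_fb, coeff_f, coeff_fb, e1, e2]
  ring

lemma key2 (μ α β : ℝ) :
    (f (μ + α) + fb (μ + α)) * (f (μ + β) + fb (μ + β))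
      - (f μ + fb μ) * (f (μ + α + β) + fb (μ + α + β))
    = -((f μ * fb μ) * ((f α - fb α) * (f β - fb β))) := by
  rw [← f_mul (μ + α) β, ← fb_mul (μ + α) β, ← f_mul μ α, ← f_mul μ β,
    ← fb_mul μ α, ← fb_mul μ β]
  ring

lemma coeff_H_nonneg {μ : ℝ} (hμ : 0 ≤ μ) (n : ℕ) : 0 ≤ coeff n (f μ * fb μ) := by
  rcases Nat.even_or_odd n with ⟨k, hk⟩ | ⟨k, hk⟩
  · rw [hk, show k + k = 2 * k by ring, (h_coeff k μ).1]
    exact c_nonneg hμ k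
  · rw [hk, (h_coeff k μ).2]

lemma coeff_D_nonneg {γ : ℝ} (h : 0 ≤ γ) (n : ℕ) : 0 ≤ coeff n (f γ - fb γ) := by
  rw [map_sub, coeff_f, coeff_fb]
  rcases Nat.even_or_odd n with he | ho
  · rw [he.neg_one_pow]; simp
  · rw [ho.neg_one_pow]; have := c_nonneg h n; linarith

lemma coeff_D_odd_pos {γ : ℝ} (h : 0 < γ) {n : ℕ} (ho : Odd n) :
    0 < coeff n (f γ - fb γ) := by
  rw [map_sub, coeff_f, coeff_fb, ho.neg_one_pow]
  have := c_pos h n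
  linarith

lemma coeff_Q_nonneg {α β : ℝ} (hα : 0 < α) (hβ : 0 < β) (n : ℕ) :
    0 ≤ coeff n ((f α - fb α) * (f β - fb β)) := by
  rw [coeff_mul]
  refine Finset.sum_nonneg fun p hp => ?_
  exact mul_nonneg (coeff_D_nonneg hα.le _) (coeff_D_nonneg hβ.le _)

lemma coeff_Q_pos {α β : ℝ} (hα : 0 < α) (hβ : 0 < β) {m : ℕ} (hm : 1 ≤ m) :
    0 < coeff (2 * m) ((f α - fb α) * (f β - fb β)) := by
  rw [coeff_mul]
  refine Finset.sum_pos' (fun p hp => mul_nonneg (coeff_D_nonneg hα.le _)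
    (coeff_D_nonneg hβ.le _)) ⟨(1, 2 * m - 1), ?_, ?_⟩
  · rw [Finset.HasAntidiagonal.mem_antidiagonal]; omega
  · exact mul_pos (coeff_D_odd_pos hα odd_one)
      (coeff_D_odd_pos hβ ⟨m - 1, by omega⟩)

lemma coeff_HQ_pos {μ α β : ℝ} (hμ : 0 ≤ μ) (hα : 0 < α) (hβ : 0 < β) {m : ℕ}
    (hm : 1 ≤ m) :
    0 < coeff (2 * m) ((f μ * fb μ) * ((f α - fb α) * (f β - fb β))) := by
  rw [coeff_mul]
  refine Finset.sum_pos' (fun p hp => mul_nonneg (coeff_H_nonneg hμ _)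
    (coeff_Q_nonneg hα hβ _)) ⟨(0, 2 * m), ?_, ?_⟩
  · simp [Finset.mem_antidiagonal]
  · have h0 : coeff 0 (f μ * fb μ) = 1 := by
      have := (h_coeff 0 μ).1
      simpa [c_zero] using this
    rw [h0, one_mul]
    exact coeff_Q_pos hα hβ hm

end Stmt8Aux

open Stmt8Aux PowerSeries Finset in
theorem stmt_8 (m : ℕ) (hm : 1 ≤ m) (μ α β : ℝ) (hμ : 0 ≤ μ) (hα : 0 < α) (hβ : 0 < β) :
    ∑ k ∈ Finset.range (m + 1),
      (risingFactorial (μ + α) (2 * k) * risingFactorial (μ + β) (2 * (m - k))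
        - risingFactorial μ (2 * k) * risingFactorial (μ + α + β) (2 * (m - k))) /
        ((Nat.factorial (2 * k) : ℝ) * (Nat.factorial (2 * (m - k)) : ℝ)) < 0 := by
  have hsum : ∑ k ∈ Finset.range (m + 1),
      (risingFactorial (μ + α) (2 * k) * risingFactorial (μ + β) (2 * (m - k))
        - risingFactorial μ (2 * k) * risingFactorial (μ + α + β) (2 * (m - k))) /
        ((Nat.factorial (2 * k) : ℝ) * (Nat.factorial (2 * (m - k)) : ℝ))
      = ∑ k ∈ range (m + 1), (c (μ + α) (2 * k) * c (μ + β) (2 * (m - k))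
          - c μ (2 * k) * c (μ + α + β) (2 * (m - k))) := by
    refine Finset.sum_congr rfl fun k hk => ?_
    have h1 : ((Nat.factorial (2 * k) : ℝ)) ≠ 0 := fact_ne _
    have h2 : ((Nat.factorial (2 * (m - k)) : ℝ)) ≠ 0 := fact_ne _
    simp only [c]
    field_simp
  have hA := bridge (μ + α) (μ + β) m
  have hB := bridge μ (μ + α + β) m
  have e : ∑ k ∈ range (m + 1), (c (μ + α) (2 * k) * c (μ + β) (2 * (m - k))
          - c μ (2 * k) * c (μ + α + β) (2 * (m - k)))
      = (coeff (2 * m) ((f (μ + α) + fb (μ + α)) * (f (μ + β) + fb (μ + β)))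
          - coeff (2 * m) ((f μ + fb μ) * (f (μ + α + β) + fb (μ + α + β)))) / 4 := by
    rw [hA, hB, ← Finset.sum_sub_distrib, Finset.sum_div]
    refine Finset.sum_congr rfl fun k hk => ?_
    ring
  rw [hsum, e, ← map_sub, key2 μ α β, map_neg]
  have hpos := coeff_HQ_pos hμ hα hβ hm
  linarith
end

section
/- Let {f_n}_{n≥1} be a log-concave sequence (indexed from n = 1). Define a_0(μ) = 0 and a_n(μ) = f_n (μ)_{2n}/(2n−1)! for n ≥ 1. Then for every μ ≥ 0, every α, β > 0, and every integer m ≥ 0, Σ_{k=0}^{m} [ a_k(μ+α)a_{m−k}(μ+β) − a_k(μ)a_{m−k}(μ+α+β) ] ≥ 0. In other words, the formal power series f(μ;x) = Σ_{n≥1} f_n (μ)_{2n} x^n/(2n−1)! is coefficient-wise log-concave in μ. -/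
set_option maxHeartbeats 1000000

/-- The coefficients `a_0(μ) = 0`, `a_n(μ) = f_n (μ)_{2n}/(2n−1)!` for `n ≥ 1`. -/
noncomputable def coeff (f : ℕ → ℝ) (n : ℕ) (μ : ℝ) : ℝ :=
  if n = 0 then 0 else f n * risingFactorial μ (2 * n) / (Nat.factorial (2 * n - 1) : ℝ)

namespace RF
local notation "rf" => risingFactorial

lemma rf_zero (x : ℝ) : rf x 0 = 1 := rfl
lemma rf_succ (x : ℝ) (n : ℕ) : rf x (n+1) = rf x n * (x + n) := rfl

lemma rf_nonneg {x : ℝ} (hx : 0 ≤ x) (n : ℕ) : 0 ≤ rf x n := by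
  induction n with
  | zero => norm_num [rf_zero]
  | succ n ih => rw [rf_succ]; exact mul_nonneg ih (by positivity)

lemma rf_pos {x : ℝ} (hx : 0 < x) (n : ℕ) : 0 < rf x n := by
  induction n with
  | zero => norm_num [rf_zero]
  | succ n ih => rw [rf_succ]; exact mul_pos ih (by positivity)

lemma rf_mono {x y : ℝ} (hx : 0 ≤ x) (hxy : x ≤ y) (n : ℕ) : rf x n ≤ rf y n := by
  induction n with
  | zero => simp [rf_zero]
  | succ n ih =>
      rw [rf_succ, rf_succ]
      exact mul_le_mul ih (by linarith) (by positivity) ((rf_nonneg (by linarith) n))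

lemma rf_add (x : ℝ) (a b : ℕ) : rf x (a + b) = rf x a * rf (x + a) b := by
  induction b with
  | zero => simp [rf_zero]
  | succ b ih =>
      rw [← Nat.add_assoc, rf_succ, ih, rf_succ, mul_assoc]
      push_cast
      ring

lemma rf_succ_left (x : ℝ) (n : ℕ) : rf x (n+1) = x * rf (x+1) n := by
  have h := rf_add x 1 n
  rw [add_comm 1 n] at h
  simpa [rf_succ, rf_zero] using h

lemma rf_two (x : ℝ) : rf x 2 = x * (x + 1) := by
  simp [rf_succ, rf_zero]

/-- Elementary exchange inequality. -/
lemma exchange (e p1 q1 p2 q2 a1 b1 a2 b2 : ℝ)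
    (hsum : p1 + q1 = p2 + q2) (h21 : p2 ≤ p1) (hpq : p1 ≤ q1) (h12 : q1 ≤ q2)
    (ha2 : 0 ≤ a2) (ha : a2 ≤ a1) (hab : a1 ≤ b1) (hb : b1 ≤ b2) :
    (a2 + b2) * ((p1+e)*a1 + (q1+e)*b1) ≤ (a1 + b1) * ((p2+e)*a2 + (q2+e)*b2) := by
  have key : (a1 + b1) * ((p2+e)*a2 + (q2+e)*b2) - (a2 + b2) * ((p1+e)*a1 + (q1+e)*b1)
      = (p1-p2)*(b1*b2 - a1*a2) + (q1-p2)*(a1*b2 - a2*b1) := by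
    linear_combination (-(a1*b2) - b1*b2) * hsum
  have hA : a1*a2 ≤ b1*b2 := by nlinarith
  have hB : a2*b1 ≤ a1*b2 := by nlinarith
  nlinarith [mul_nonneg (by linarith : (0:ℝ) ≤ p1 - p2) (by linarith : (0:ℝ) ≤ b1*b2 - a1*a2),
    mul_nonneg (by linarith : (0:ℝ) ≤ q1 - p2) (by linarith : (0:ℝ) ≤ a1*b2 - a2*b1)]

/-- Ratio chaining. -/
lemma chain2 (g1 g2 h1 h2 k1 k2 : ℝ) (hg2 : 0 ≤ g2) (hk1 : 0 ≤ k1) (hg1 : 0 ≤ g1)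
    (hh1 : 0 < h1) (hh2 : 0 < h2)
    (A : g2*h1 ≤ g1*h2) (B : h2*k1 ≤ h1*k2) : g2*k1 ≤ g1*k2 := by
  have h := mul_le_mul A B (mul_nonneg hh2.le hk1) (mul_nonneg hg1 hh2.le)
  have hpos : 0 < h1 * h2 := mul_pos hh1 hh2
  have : (g2*k1) * (h1*h2) ≤ (g1*k2) * (h1*h2) := by nlinarith [h]
  exact le_of_mul_le_mul_right this hpos

lemma pairprod (p1 q1 p2 q2 : ℝ) (hsum : p1 + q1 = p2 + q2)
    (h21 : p2 ≤ p1) (hpq : p1 ≤ q1) (h2 : 0 ≤ p2) : p2 * q2 ≤ p1 * q1 := by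
  nlinarith [mul_nonneg (by linarith : (0:ℝ) ≤ p1 - p2) (by linarith : (0:ℝ) ≤ q1 - p2)]

/-- Single exchange step specialized to shifted points. -/
lemma step_shift (A1 B1 A2 B2 : ℝ)
    (hsum : A1 + B1 = A2 + B2) (h21 : A2 ≤ A1) (hpq : A1 ≤ B1) (h12 : B1 ≤ B2)
    (hA2 : 0 ≤ A2) (s e : ℝ) (hs : 0 ≤ s) (r : ℕ) :
    (rf (A2+s) r + rf (B2+s) r) * ((A1+s+e) * rf (A1+s) r + (B1+s+e) * rf (B1+s) r) ≤
    (rf (A1+s) r + rf (B1+s) r) * ((A2+s+e) * rf (A2+s) r + (B2+s+e) * rf (B2+s) r) := by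
  have m0 : 0 ≤ rf (A2+s) r := rf_nonneg (by linarith) r
  have m1 : rf (A2+s) r ≤ rf (A1+s) r := rf_mono (by linarith) (by linarith) r
  have m2 : rf (A1+s) r ≤ rf (B1+s) r := rf_mono (by linarith) (by linarith) r
  have m3 : rf (B1+s) r ≤ rf (B2+s) r := rf_mono (by linarith) (by linarith) r
  have h := exchange e (A1+s) (B1+s) (A2+s) (B2+s) (rf (A1+s) r) (rf (B1+s) r)
    (rf (A2+s) r) (rf (B2+s) r) (by linarith) (by linarith) (by linarith) (by linarith)
    m0 m1 m2 m3
  calc (rf (A2+s) r + rf (B2+s) r) * ((A1+s+e) * rf (A1+s) r + (B1+s+e) * rf (B1+s) r)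
      = (rf (A2+s) r + rf (B2+s) r) * (((A1+s)+e) * rf (A1+s) r + ((B1+s)+e) * rf (B1+s) r) := by ring
    _ ≤ (rf (A1+s) r + rf (B1+s) r) * (((A2+s)+e) * rf (A2+s) r + ((B2+s)+e) * rf (B2+s) r) := h
    _ = (rf (A1+s) r + rf (B1+s) r) * ((A2+s+e) * rf (A2+s) r + (B2+s+e) * rf (B2+s) r) := by ring

/-- Core ratio claim (part B). -/
lemma ratio_core (M : ℕ) (hM : 2 ≤ M) (A1 B1 A2 B2 : ℝ)
    (hsum : A1 + B1 = A2 + B2) (h21 : A2 ≤ A1) (hpq : A1 ≤ B1) (h12 : B1 ≤ B2)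
    (hA2 : 0 ≤ A2) (hB1 : 0 < B1) (hB2 : 0 < B2) :
    (rf A2 2 * rf B2 M + rf B2 2 * rf A2 M) * (rf A1 (M+2) + rf B1 (M+2)) ≤
    (rf A1 2 * rf B1 M + rf B1 2 * rf A1 M) * (rf A2 (M+2) + rf B2 (M+2)) := by
  obtain ⟨K, rfl⟩ : ∃ K, M = K + 2 := ⟨M - 2, by omega⟩
  have hA1 : 0 ≤ A1 := le_trans hA2 h21
  have hB1' : 0 ≤ B1 := hB1.le
  have hB2' : 0 ≤ B2 := hB2.le
  -- rewriting identities
  have t12 : ∀ x : ℝ, rf (x+2) (K+1) = (x+2+(K:ℝ)) * rf (x+2) K := by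
    intro x; rw [rf_succ]; ring
  have t23 : ∀ x : ℝ, rf (x+2) (K+2) = (x+2+((K:ℝ)+1)) * rf (x+2) (K+1) := by
    intro x; rw [rf_succ]; push_cast; ring
  have t34 : ∀ x : ℝ, rf (x+1) (K+3) = (x+2+(-1:ℝ)) * rf (x+2) (K+2) := by
    intro x
    have h := rf_succ_left (x+1) (K+2)
    rw [show x+1+1 = x+2 by ring] at h
    rw [h]; ring
  have t45 : ∀ x : ℝ, rf x (K+4) = (x+1+(-1:ℝ)) * rf (x+1) (K+3) := by
    intro x
    have h := rf_succ_left x (K+3)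
    rw [h]; ring
  -- chain inequalities
  have s12 : (rf (A2+2) K + rf (B2+2) K) * (rf (A1+2) (K+1) + rf (B1+2) (K+1)) ≤
      (rf (A1+2) K + rf (B1+2) K) * (rf (A2+2) (K+1) + rf (B2+2) (K+1)) := by
    rw [t12 A1, t12 B1, t12 A2, t12 B2]
    exact step_shift A1 B1 A2 B2 hsum h21 hpq h12 hA2 2 (K:ℝ) (by norm_num) K
  have s23 : (rf (A2+2) (K+1) + rf (B2+2) (K+1)) * (rf (A1+2) (K+2) + rf (B1+2) (K+2)) ≤
      (rf (A1+2) (K+1) + rf (B1+2) (K+1)) * (rf (A2+2) (K+2) + rf (B2+2) (K+2)) := by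
    rw [t23 A1, t23 B1, t23 A2, t23 B2]
    exact step_shift A1 B1 A2 B2 hsum h21 hpq h12 hA2 2 ((K:ℝ)+1) (by norm_num) (K+1)
  have s34 : (rf (A2+2) (K+2) + rf (B2+2) (K+2)) * (rf (A1+1) (K+3) + rf (B1+1) (K+3)) ≤
      (rf (A1+2) (K+2) + rf (B1+2) (K+2)) * (rf (A2+1) (K+3) + rf (B2+1) (K+3)) := by
    rw [t34 A1, t34 B1, t34 A2, t34 B2]
    exact step_shift A1 B1 A2 B2 hsum h21 hpq h12 hA2 2 (-1 : ℝ) (by norm_num) (K+2)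
  have s45 : (rf (A2+1) (K+3) + rf (B2+1) (K+3)) * (rf A1 (K+4) + rf B1 (K+4)) ≤
      (rf (A1+1) (K+3) + rf (B1+1) (K+3)) * (rf A2 (K+4) + rf B2 (K+4)) := by
    rw [t45 A1, t45 B1, t45 A2, t45 B2]
    exact step_shift A1 B1 A2 B2 hsum h21 hpq h12 hA2 1 (-1 : ℝ) (by norm_num) (K+3)
  -- positivity facts
  have p2_1 : 0 < rf (A1+2) (K+1) + rf (B1+2) (K+1) := by
    have h1 := rf_pos (show (0:ℝ) < B1+2 by linarith) (K+1)
    have h2 := rf_nonneg (show (0:ℝ) ≤ A1+2 by linarith) (K+1)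
    linarith
  have p2_2 : 0 < rf (A2+2) (K+1) + rf (B2+2) (K+1) := by
    have h1 := rf_pos (show (0:ℝ) < B2+2 by linarith) (K+1)
    have h2 := rf_nonneg (show (0:ℝ) ≤ A2+2 by linarith) (K+1)
    linarith
  have p3_1 : 0 < rf (A1+2) (K+2) + rf (B1+2) (K+2) := by
    have h1 := rf_pos (show (0:ℝ) < B1+2 by linarith) (K+2)
    have h2 := rf_nonneg (show (0:ℝ) ≤ A1+2 by linarith) (K+2)
    linarith
  have p3_2 : 0 < rf (A2+2) (K+2) + rf (B2+2) (K+2) := by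
    have h1 := rf_pos (show (0:ℝ) < B2+2 by linarith) (K+2)
    have h2 := rf_nonneg (show (0:ℝ) ≤ A2+2 by linarith) (K+2)
    linarith
  have p4_1 : 0 < rf (A1+1) (K+3) + rf (B1+1) (K+3) := by
    have h1 := rf_pos (show (0:ℝ) < B1+1 by linarith) (K+3)
    have h2 := rf_nonneg (show (0:ℝ) ≤ A1+1 by linarith) (K+3)
    linarith
  have p4_2 : 0 < rf (A2+1) (K+3) + rf (B2+1) (K+3) := by
    have h1 := rf_pos (show (0:ℝ) < B2+1 by linarith) (K+3)
    have h2 := rf_nonneg (show (0:ℝ) ≤ A2+1 by linarith) (K+3)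
    linarith
  have p1_1 : 0 ≤ rf (A1+2) K + rf (B1+2) K := by
    have h1 := rf_nonneg (show (0:ℝ) ≤ A1+2 by linarith) K
    have h2 := rf_nonneg (show (0:ℝ) ≤ B1+2 by linarith) K
    linarith
  have p1_2 : 0 ≤ rf (A2+2) K + rf (B2+2) K := by
    have h1 := rf_nonneg (show (0:ℝ) ≤ A2+2 by linarith) K
    have h2 := rf_nonneg (show (0:ℝ) ≤ B2+2 by linarith) K
    linarith
  have p5_1 : 0 ≤ rf A1 (K+4) + rf B1 (K+4) := by
    have h1 := rf_nonneg hA1 (K+4)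
    have h2 := rf_nonneg hB1' (K+4)
    linarith
  have p5_2 : 0 ≤ rf A2 (K+4) + rf B2 (K+4) := by
    have h1 := rf_nonneg hA2 (K+4)
    have h2 := rf_nonneg hB2' (K+4)
    linarith
  have c13 := chain2 _ _ _ _ _ _ p1_2 p3_1.le p1_1 p2_1 p2_2 s12 s23
  have c14 := chain2 _ _ _ _ _ _ p1_2 p4_1.le p1_1 p3_1 p3_2 c13 s34
  have c15 := chain2 _ _ _ _ _ _ p1_2 p5_1 p1_1 p4_1 p4_2 c14 s45
  -- prefactors
  have pf1 : rf A2 2 * rf B2 2 ≤ rf A1 2 * rf B1 2 := by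
    rw [rf_two, rf_two, rf_two, rf_two]
    have h1 : A2 * B2 ≤ A1 * B1 := pairprod A1 B1 A2 B2 hsum h21 hpq hA2
    have h2 : (A2+1) * (B2+1) ≤ (A1+1) * (B1+1) :=
      pairprod (A1+1) (B1+1) (A2+1) (B2+1) (by linarith) (by linarith) (by linarith) (by linarith)
    calc A2 * (A2+1) * (B2 * (B2+1)) = (A2 * B2) * ((A2+1)*(B2+1)) := by ring
      _ ≤ (A1 * B1) * ((A1+1)*(B1+1)) := by
          apply mul_le_mul h1 h2 (mul_nonneg (by linarith) (by linarith)) (mul_nonneg (by linarith) (by linarith))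
      _ = A1 * (A1+1) * (B1 * (B1+1)) := by ring
  have pf2 : 0 ≤ rf A2 2 * rf B2 2 := mul_nonneg (rf_nonneg hA2 2) (rf_nonneg hB2' 2)
  -- split identities
  have split1 : ∀ x y : ℝ,
      rf x 2 * rf y (K+2) + rf y 2 * rf x (K+2) = rf x 2 * rf y 2 * (rf (x+2) K + rf (y+2) K) := by
    intro x y
    have hx2 : rf y (2 + K) = rf y 2 * rf (y+2) K := rf_add y 2 K
    have hy2 : rf x (2 + K) = rf x 2 * rf (x+2) K := rf_add x 2 K
    rw [Nat.add_comm K 2, hx2, hy2]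
    ring
  have e42 : (K+2)+2 = K+4 := by omega
  rw [e42, split1 A1 B1, split1 A2 B2]
  calc rf A2 2 * rf B2 2 * (rf (A2+2) K + rf (B2+2) K) * (rf A1 (K+4) + rf B1 (K+4))
      = rf A2 2 * rf B2 2 * ((rf (A2+2) K + rf (B2+2) K) * (rf A1 (K+4) + rf B1 (K+4))) := by ring
    _ ≤ rf A2 2 * rf B2 2 * ((rf (A1+2) K + rf (B1+2) K) * (rf A2 (K+4) + rf B2 (K+4))) := by
        apply mul_le_mul_of_nonneg_left c15 pf2
    _ ≤ rf A1 2 * rf B1 2 * ((rf (A1+2) K + rf (B1+2) K) * (rf A2 (K+4) + rf B2 (K+4))) := by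
        apply mul_le_mul_of_nonneg_right pf1 (mul_nonneg p1_1 p5_2)
    _ = rf A1 2 * rf B1 2 * (rf (A1+2) K + rf (B1+2) K) * (rf A2 (K+4) + rf B2 (K+4)) := by ring


lemma rf_base_zero (n : ℕ) : rf 0 (n+1) = 0 := by
  induction n with
  | zero => simp [rf_succ, rf_zero]
  | succ n ih => rw [rf_succ, ih, zero_mul]

open Finset

noncomputable def cs (ε a b : ℝ) (n : ℕ) : ℝ :=
  ∑ i ∈ range (n+1), ε^i * rf a i * rf b (n-i) / (i.factorial * (n-i).factorial)

noncomputable def csM (ε a b : ℝ) (n : ℕ) : ℝ :=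
  ∑ i ∈ range (n+1), ε^i * i * rf a i * rf b (n-i) / (i.factorial * (n-i).factorial)

noncomputable def csN (ε a b : ℝ) (n : ℕ) : ℝ :=
  ∑ i ∈ range (n+1), ε^i * ((n-i : ℕ) : ℝ) * rf a i * rf b (n-i) / (i.factorial * (n-i).factorial)

lemma csMN (ε a b : ℝ) (n : ℕ) : csM ε a b n + csN ε a b n = n * cs ε a b n := by
  rw [csM, csN, cs, ← Finset.sum_add_distrib, Finset.mul_sum]
  apply Finset.sum_congr rfl
  intro i hi
  have hin : i ≤ n := by simpa [Nat.lt_succ_iff] using hi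
  have : ((n - i : ℕ) : ℝ) = (n : ℝ) - i := by
    push_cast [hin]; ring
  rw [this]; ring

lemma csM_succ (ε a b : ℝ) (n : ℕ) :
    csM ε a b (n+1) = ε * (a * cs ε a b n + csM ε a b n) := by
  rw [csM, Finset.sum_range_succ']
  have h0 : ε^0 * ((0:ℕ):ℝ) * rf a 0 * rf b (n+1-0) / ((Nat.factorial 0 : ℝ) * (Nat.factorial (n+1-0))) = 0 := by
    simp
  rw [h0, add_zero, cs, csM, Finset.mul_sum, ← Finset.sum_add_distrib, Finset.mul_sum]
  apply Finset.sum_congr rfl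
  intro i hi
  have hin : i ≤ n := by simpa [Nat.lt_succ_iff] using hi
  have e1 : n + 1 - (i+1) = n - i := by omega
  have e2 : rf a (i+1) = rf a i * (a + i) := rf_succ a i
  have e3 : ((Nat.factorial (i+1) : ℝ)) = ((i:ℝ)+1) * (Nat.factorial i) := by
    rw [Nat.factorial_succ]; push_cast; ring
  rw [e1, e2, e3]
  have hfi : (Nat.factorial i : ℝ) ≠ 0 := by positivity
  have hfn : (Nat.factorial (n-i) : ℝ) ≠ 0 := by positivity
  have hi1 : ((i:ℝ)+1) ≠ 0 := by positivity
  push_cast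
  field_simp
  ring

lemma csN_succ (ε a b : ℝ) (n : ℕ) :
    csN ε a b (n+1) = b * cs ε a b n + csN ε a b n := by
  rw [csN, Finset.sum_range_succ]
  have h0 : ε^(n+1) * ((n+1-(n+1) : ℕ):ℝ) * rf a (n+1) * rf b (n+1-(n+1)) / ((Nat.factorial (n+1) : ℝ) * (Nat.factorial (n+1-(n+1)))) = 0 := by
    simp
  rw [h0, add_zero, cs, csN, Finset.mul_sum, ← Finset.sum_add_distrib]
  apply Finset.sum_congr rfl
  intro i hi
  have hin : i ≤ n := by simpa [Nat.lt_succ_iff] using hi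
  obtain ⟨j, rfl⟩ : ∃ j, n = i + j := ⟨n - i, by omega⟩
  have e0 : i + j - i = j := by omega
  have e1 : i + j + 1 - i = j + 1 := by omega
  rw [e0, e1]
  have e2 : rf b (j+1) = rf b j * (b + (j:ℝ)) := rf_succ b j
  have e3 : ((Nat.factorial (j+1) : ℝ)) = ((j:ℝ)+1) * (Nat.factorial j) := by
    rw [Nat.factorial_succ]; push_cast; ring
  rw [e2, e3]
  have hfi : (Nat.factorial i : ℝ) ≠ 0 := by positivity
  have hfn : (Nat.factorial j : ℝ) ≠ 0 := by positivity
  have hni : ((j:ℝ)) + 1 ≠ 0 := by positivity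
  push_cast
  field_simp

lemma cs_rec (ε a b : ℝ) (hε : ε^2 = 1) (n : ℕ) :
    ((n:ℝ)+2) * cs ε a b (n+2) = (ε*a+b) * cs ε a b (n+1) + (a+b+n) * cs ε a b n := by
  have h1 : ((n:ℝ)+2) * cs ε a b (n+2) = csM ε a b (n+2) + csN ε a b (n+2) := by
    have := csMN ε a b (n+2); push_cast at this ⊢; linarith
  have h2 : csM ε a b (n+2) = ε * (a * cs ε a b (n+1) + csM ε a b (n+1)) := csM_succ ε a b (n+1)
  have h3 : csN ε a b (n+2) = b * cs ε a b (n+1) + csN ε a b (n+1) := csN_succ ε a b (n+1)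
  have h4 : csM ε a b (n+1) = ε * (a * cs ε a b n + csM ε a b n) := csM_succ ε a b n
  have h5 : csN ε a b (n+1) = b * cs ε a b n + csN ε a b n := csN_succ ε a b n
  have h6 : csM ε a b n + csN ε a b n = n * cs ε a b n := csMN ε a b n
  rw [h1, h2, h3, h4, h5]
  linear_combination (a * cs ε a b n + csM ε a b n) * hε + h6

lemma cs_zero (ε a b : ℝ) : cs ε a b 0 = 1 := by
  simp [cs, rf_zero]

lemma cs_one_val (ε a b : ℝ) : cs ε a b 1 = b + ε * a := by
  rw [cs]
  rw [Finset.sum_range_succ, Finset.sum_range_one]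
  simp [rf_zero, rf_succ, Nat.factorial]

lemma cs_vandermonde (a b : ℝ) (n : ℕ) : cs 1 a b n = rf (a+b) n / n.factorial := by
  suffices H : ∀ m : ℕ, cs 1 a b m = rf (a+b) m / m.factorial ∧
      cs 1 a b (m+1) = rf (a+b) (m+1) / (m+1).factorial from (H n).1
  intro m
  induction m with
  | zero =>
      constructor
      · simp [cs_zero, rf_zero]
      · rw [cs_one_val]; simp [rf_succ, rf_zero, Nat.factorial]; ring
  | succ m ih =>
      refine ⟨ih.2, ?_⟩
      have hrec := cs_rec 1 a b (by norm_num) m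
      rw [ih.1, ih.2] at hrec
      have hm2 : ((m:ℝ)+2) ≠ 0 := by positivity
      have hf0 : (Nat.factorial m : ℝ) ≠ 0 := by positivity
      have hf1' : ((Nat.factorial (m+1)) : ℝ) = ((m:ℝ)+1) * (Nat.factorial m) := by
        rw [Nat.factorial_succ]; push_cast; ring
      have hr1 : rf (a+b) (m+1) = rf (a+b) m * (a+b+m) := rf_succ _ _
      have hr2 : rf (a+b) (m+2) = rf (a+b) (m+1) * (a+b+((m:ℝ)+1)) := by
        rw [rf_succ]; push_cast; ring_nf
      have hrec3 : ((m:ℝ)+2) * cs 1 a b (m+2) * (((m:ℝ)+1) * (Nat.factorial m)) =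
          (a+b) * rf (a+b) (m+1) + (a+b+(m:ℝ)) * rf (a+b) m * ((m:ℝ)+1) := by
        rw [hrec, hf1']
        have hm1 : ((m:ℝ)+1) ≠ 0 := by positivity
        field_simp
      rw [eq_div_iff (show ((Nat.factorial (m+2)):ℝ) ≠ 0 by positivity)]
      have h2' : ((Nat.factorial (m+2)) : ℝ) = ((m:ℝ)+2) * (((m:ℝ)+1) * (Nat.factorial m)) := by
        rw [Nat.factorial_succ, Nat.factorial_succ]; push_cast; ring
      rw [h2', hr2, hr1]
      rw [hr1] at hrec3
      linear_combination hrec3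

lemma cs_left_zero (ε c : ℝ) (n : ℕ) : cs ε 0 c n = rf c n / n.factorial := by
  rw [cs]
  rw [Finset.sum_eq_single 0]
  · simp [rf_zero]
  · intro i hi hne
    rcases Nat.exists_eq_succ_of_ne_zero hne with ⟨j, rfl⟩
    rw [rf_base_zero]
    simp
  · intro h
    exact absurd (Finset.mem_range.mpr (Nat.succ_pos n)) h



noncomputable def psiF (μ α β : ℝ) (m k : ℕ) : ℝ :=
  (risingFactorial (μ+α) (2*k) * risingFactorial (μ+β) (2*(m-k))
    - risingFactorial μ (2*k) * risingFactorial (μ+α+β) (2*(m-k))) /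
    (((2*k-1).factorial : ℝ) * ((2*(m-k)-1).factorial : ℝ))

noncomputable def XsF (m k : ℕ) (x y : ℝ) : ℝ :=
  risingFactorial x (2*k) * risingFactorial y (2*(m-k))
    + risingFactorial y (2*k) * risingFactorial x (2*(m-k))

noncomputable def XiF (μ α β : ℝ) (m k : ℕ) : ℝ :=
  XsF m k (μ+α) (μ+β) - XsF m k μ (μ+α+β)


lemma parity_sum (G : ℕ → ℝ) (M : ℕ) :
    ∑ i ∈ Finset.range (2*M+1), (1 - (-1:ℝ)^i) * G i = ∑ k ∈ Finset.range M, 2 * G (2*k+1) := by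
  induction M with
  | zero => simp
  | succ M ih =>
      have e : 2*(M+1)+1 = (2*M+1) + 1 + 1 := by omega
      rw [e, Finset.sum_range_succ, Finset.sum_range_succ, ih, Finset.sum_range_succ]
      have o1 : (-1:ℝ)^(2*M+1) = -1 := by
        rw [pow_succ, pow_mul]; norm_num
      have o2 : (-1:ℝ)^(2*M+1+1) = 1 := by
        rw [pow_succ, o1]; norm_num
      rw [o1, o2]
      ring

lemma master (x y : ℝ) {m : ℕ} (hm : 1 ≤ m) :
    ∑ k ∈ Finset.Icc 1 (m-1),
        rf x (2*k) * rf y (2*(m-k)) / (((2*k-1).factorial:ℝ) * ((2*(m-k)-1).factorial:ℝ))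
      = x * y / 2 * (cs 1 (x+1) (y+1) (2*m-2) - cs (-1) (x+1) (y+1) (2*m-2)) := by
  have hdiff : cs 1 (x+1) (y+1) (2*m-2) - cs (-1) (x+1) (y+1) (2*m-2)
      = ∑ i ∈ Finset.range (2*m-2+1), (1 - (-1:ℝ)^i) *
          (rf (x+1) i * rf (y+1) (2*m-2-i) / ((i.factorial:ℝ) * ((2*m-2-i).factorial:ℝ))) := by
    rw [cs, cs, ← Finset.sum_sub_distrib]
    apply Finset.sum_congr rfl
    intro i _
    rw [one_pow]
    ring
  have e2 : 2*m-2+1 = 2*(m-1)+1 := by omega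
  rw [hdiff, e2, parity_sum]
  have eIcc : Finset.Icc 1 (m-1) = Finset.Ico 1 m := by
    rw [← Finset.Ico_add_one_right_eq_Icc]
    congr 1
    omega
  rw [eIcc, Finset.sum_Ico_eq_sum_range, show m - 1 = m - 1 from rfl, Finset.mul_sum]
  apply Finset.sum_congr rfl
  intro k hk
  have hk2 : k + 2 ≤ m := by
    have := Finset.mem_range.mp hk; omega
  have e3 : 2*(1+k) = (2*k+1)+1 := by omega
  have e4 : 2*(m-(1+k)) = (2*m-2-(2*k+1)) + 1 := by omega
  have e5 : 2*(1+k)-1 = 2*k+1 := by omega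
  have e6 : 2*(m-(1+k))-1 = 2*m-2-(2*k+1) := by omega
  rw [e5, e6, e3, e4, rf_succ_left x (2*k+1), rf_succ_left y (2*m-2-(2*k+1))]
  ring

noncomputable def Hq (μ α β : ℝ) (n r : ℕ) : ℝ :=
  α*β*(2*μ+α+β+2)^r * cs (-1) 0 (2*μ+α+β+2) n
  + μ*(μ+α+β)*(α+β)^r * cs (-1) (μ+1) (μ+α+β+1) n
  - (μ+α)*(μ+β)*(β-α)^r * cs (-1) (μ+α+1) (μ+β+1) n

lemma Hq_nonneg (μ α β : ℝ) (hμ : 0 ≤ μ) (hα : 0 < α) (hβ : 0 < β) (hab : α ≤ β) :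
    ∀ n r, 0 ≤ Hq μ α β n r := by
  have base : ∀ r, 0 ≤ Hq μ α β 0 r := by
    intro r
    rw [Hq, cs_zero, cs_zero, cs_zero]
    have h1 : (β-α)^r ≤ (α+β)^r := pow_le_pow_left₀ (by linarith) (by linarith) r
    have h2 : (β-α)^r ≤ (2*μ+α+β+2)^r := pow_le_pow_left₀ (by linarith) (by linarith) r
    have k1 : 0 ≤ μ*(μ+α+β) * ((α+β)^r - (β-α)^r) :=
      mul_nonneg (by positivity) (by linarith)
    have k2 : 0 ≤ α*β * ((2*μ+α+β+2)^r - (β-α)^r) :=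
      mul_nonneg (by positivity) (by linarith)
    nlinarith [k1, k2]
  have base1 : ∀ r, 0 ≤ Hq μ α β 1 r := by
    intro r
    have e : Hq μ α β 1 r = Hq μ α β 0 (r+1) := by
      rw [Hq, Hq, cs_zero, cs_zero, cs_zero, cs_one_val, cs_one_val, cs_one_val,
        pow_succ, pow_succ, pow_succ]
      ring
    rw [e]; exact base (r+1)
  suffices H : ∀ n, (∀ r, 0 ≤ Hq μ α β n r) ∧ (∀ r, 0 ≤ Hq μ α β (n+1) r) by
    intro n r; exact (H n).1 r
  intro n
  induction n with
  | zero => exact ⟨base, base1⟩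
  | succ n ih =>
      refine ⟨ih.2, ?_⟩
      intro r
      have r0 := cs_rec (-1) 0 (2*μ+α+β+2) (by norm_num) n
      have r1 := cs_rec (-1) (μ+1) (μ+α+β+1) (by norm_num) n
      have r2 := cs_rec (-1) (μ+α+1) (μ+β+1) (by norm_num) n
      have key : ((n:ℝ)+2) * Hq μ α β (n+2) r
          = Hq μ α β (n+1) (r+1) + (2*μ+α+β+2+n) * Hq μ α β n r := by
        rw [Hq, Hq, Hq]
        linear_combination (α*β*(2*μ+α+β+2)^r) * r0 + (μ*(μ+α+β)*(α+β)^r) * r1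
          - ((μ+α)*(μ+β)*(β-α)^r) * r2
      have h1 := ih.2 (r+1)
      have h2 := ih.1 r
      have hσ : (0:ℝ) ≤ 2*μ+α+β+2+n := by positivity
      by_contra hcon
      push_neg at hcon
      nlinarith [key, h1, h2, mul_nonneg hσ h2]

lemma T1_nonneg (μ α β : ℝ) (hμ : 0 ≤ μ) (hα : 0 < α) (hβ : 0 < β) (hab : α ≤ β)
    {m : ℕ} (hm : 1 ≤ m) : 0 ≤ ∑ k ∈ Finset.Icc 1 (m-1), psiF μ α β m k := by
  have hsplit : ∑ k ∈ Finset.Icc 1 (m-1), psiF μ α β m k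
      = (∑ k ∈ Finset.Icc 1 (m-1), rf (μ+α) (2*k) * rf (μ+β) (2*(m-k)) /
            (((2*k-1).factorial:ℝ) * ((2*(m-k)-1).factorial:ℝ)))
        - (∑ k ∈ Finset.Icc 1 (m-1), rf μ (2*k) * rf (μ+α+β) (2*(m-k)) /
            (((2*k-1).factorial:ℝ) * ((2*(m-k)-1).factorial:ℝ))) := by
    rw [← Finset.sum_sub_distrib]
    apply Finset.sum_congr rfl
    intro k _
    rw [psiF, sub_div]
  rw [hsplit, master (μ+α) (μ+β) hm, master μ (μ+α+β) hm]
  have hv1 : cs 1 (μ+α+1) (μ+β+1) (2*m-2)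
      = rf (2*μ+α+β+2) (2*m-2) / (((2*m-2).factorial) : ℝ) := by
    rw [cs_vandermonde, show μ+α+1+(μ+β+1) = 2*μ+α+β+2 by ring]
  have hv2 : cs 1 (μ+1) (μ+α+β+1) (2*m-2)
      = rf (2*μ+α+β+2) (2*m-2) / (((2*m-2).factorial) : ℝ) := by
    rw [cs_vandermonde, show μ+1+(μ+α+β+1) = 2*μ+α+β+2 by ring]
  have hL : cs (-1) 0 (2*μ+α+β+2) (2*m-2)
      = rf (2*μ+α+β+2) (2*m-2) / (((2*m-2).factorial) : ℝ) := cs_left_zero _ _ _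
  have hfin : (μ+α) * (μ+β) / 2 * (cs 1 (μ+α+1) (μ+β+1) (2*m-2) - cs (-1) (μ+α+1) (μ+β+1) (2*m-2))
      - μ * (μ+α+β) / 2 * (cs 1 (μ+1) (μ+α+β+1) (2*m-2) - cs (-1) (μ+1) (μ+α+β+1) (2*m-2))
      = Hq μ α β (2*m-2) 0 / 2 := by
    rw [hv1, hv2, Hq, ← hL]
    ring
  rw [hfin]
  have := Hq_nonneg μ α β hμ hα hβ hab (2*m-2) 0
  linarith

lemma psi_pair (μ α β : ℝ) (m k : ℕ) (hk : k ≤ m) :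
    psiF μ α β m k + psiF μ α β m (m-k)
      = XiF μ α β m k / (((2*k-1).factorial:ℝ) * ((2*(m-k)-1).factorial:ℝ)) := by
  rw [psiF, psiF, XiF, XsF, XsF, show m-(m-k) = k by omega]
  rw [show ((2*(m-k)-1).factorial:ℝ) * ((2*k-1).factorial:ℝ)
      = ((2*k-1).factorial:ℝ) * ((2*(m-k)-1).factorial:ℝ) from mul_comm _ _]
  rw [← add_div]
  congr 1
  ring

lemma Xi_symm (μ α β : ℝ) (m k : ℕ) (hk : k ≤ m) : XiF μ α β m (m-k) = XiF μ α β m k := by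
  rw [XiF, XiF, XsF, XsF, XsF, XsF, show m-(m-k) = k by omega]
  ring

lemma Xi_step (μ α β : ℝ) (hμ : 0 < μ) (hα : 0 < α) (hβ : 0 < β) (hab : α ≤ β)
    (m k : ℕ) (hk : 1 ≤ k) (hkm : 2*(k+1) ≤ m) (h : 0 ≤ XiF μ α β m k) :
    0 ≤ XiF μ α β m (k+1) := by
  have hcast : (0:ℝ) ≤ ((2*k : ℕ):ℝ) := Nat.cast_nonneg _
  have hM2 : 2 ≤ 2*m - 4*k - 2 := by omega
  have hsplit0 : ∀ x y : ℝ, XsF m k x y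
      = rf x (2*k) * rf y (2*k) *
        (rf (x + ((2*k:ℕ):ℝ)) ((2*m-4*k-2)+2) + rf (y + ((2*k:ℕ):ℝ)) ((2*m-4*k-2)+2)) := by
    intro x y
    rw [XsF]
    have e1 : 2*(m-k) = 2*k + ((2*m-4*k-2)+2) := by omega
    rw [e1, rf_add x (2*k) ((2*m-4*k-2)+2), rf_add y (2*k) ((2*m-4*k-2)+2)]
    ring
  have hsplit1 : ∀ x y : ℝ, XsF m (k+1) x y
      = rf x (2*k) * rf y (2*k) *
        (rf (x + ((2*k:ℕ):ℝ)) 2 * rf (y + ((2*k:ℕ):ℝ)) (2*m-4*k-2)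
          + rf (y + ((2*k:ℕ):ℝ)) 2 * rf (x + ((2*k:ℕ):ℝ)) (2*m-4*k-2)) := by
    intro x y
    rw [XsF]
    have e1 : 2*(k+1) = 2*k + 2 := by omega
    have e2 : 2*(m-(k+1)) = 2*k + (2*m-4*k-2) := by omega
    rw [e1, e2, rf_add x (2*k) 2, rf_add y (2*k) 2, rf_add x (2*k) (2*m-4*k-2),
      rf_add y (2*k) (2*m-4*k-2)]
    ring
  have hrc := ratio_core (2*m-4*k-2) hM2
    (μ+α+((2*k:ℕ):ℝ)) (μ+β+((2*k:ℕ):ℝ)) (μ+((2*k:ℕ):ℝ)) (μ+α+β+((2*k:ℕ):ℝ))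
    (by ring) (by linarith) (by linarith) (by linarith) (by linarith) (by linarith) (by linarith)
  have hP1pos : 0 < rf (μ+α) (2*k) * rf (μ+β) (2*k) :=
    mul_pos (rf_pos (by linarith) _) (rf_pos (by linarith) _)
  have hS0_2pos : 0 < rf (μ+((2*k:ℕ):ℝ)) ((2*m-4*k-2)+2) + rf (μ+α+β+((2*k:ℕ):ℝ)) ((2*m-4*k-2)+2) := by
    have hh1 := rf_pos (show (0:ℝ) < μ+α+β+((2*k:ℕ):ℝ) by linarith) ((2*m-4*k-2)+2)
    have hh2 := rf_nonneg (show (0:ℝ) ≤ μ+((2*k:ℕ):ℝ) by linarith) ((2*m-4*k-2)+2)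
    linarith
  have hS1_2nn : 0 ≤ rf (μ+((2*k:ℕ):ℝ)) 2 * rf (μ+α+β+((2*k:ℕ):ℝ)) (2*m-4*k-2)
      + rf (μ+α+β+((2*k:ℕ):ℝ)) 2 * rf (μ+((2*k:ℕ):ℝ)) (2*m-4*k-2) := by
    have n1 := rf_nonneg (show (0:ℝ) ≤ μ+((2*k:ℕ):ℝ) by linarith) 2
    have n2 := rf_nonneg (show (0:ℝ) ≤ μ+α+β+((2*k:ℕ):ℝ) by linarith) (2*m-4*k-2)
    have n3 := rf_nonneg (show (0:ℝ) ≤ μ+α+β+((2*k:ℕ):ℝ) by linarith) 2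
    have n4 := rf_nonneg (show (0:ℝ) ≤ μ+((2*k:ℕ):ℝ) by linarith) (2*m-4*k-2)
    nlinarith [mul_nonneg n1 n2, mul_nonneg n3 n4]
  rw [XiF, hsplit0, hsplit0, sub_nonneg] at h
  rw [XiF, hsplit1, hsplit1, sub_nonneg]
  set P1 := rf (μ+α) (2*k) * rf (μ+β) (2*k) with hP1d
  set P2 := rf μ (2*k) * rf (μ+α+β) (2*k) with hP2d
  set S1a := rf (μ+α+((2*k:ℕ):ℝ)) 2 * rf (μ+β+((2*k:ℕ):ℝ)) (2*m-4*k-2)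
      + rf (μ+β+((2*k:ℕ):ℝ)) 2 * rf (μ+α+((2*k:ℕ):ℝ)) (2*m-4*k-2) with hS1ad
  set S1b := rf (μ+((2*k:ℕ):ℝ)) 2 * rf (μ+α+β+((2*k:ℕ):ℝ)) (2*m-4*k-2)
      + rf (μ+α+β+((2*k:ℕ):ℝ)) 2 * rf (μ+((2*k:ℕ):ℝ)) (2*m-4*k-2) with hS1bd
  set S0a := rf (μ+α+((2*k:ℕ):ℝ)) ((2*m-4*k-2)+2) + rf (μ+β+((2*k:ℕ):ℝ)) ((2*m-4*k-2)+2) with hS0ad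
  set S0b := rf (μ+((2*k:ℕ):ℝ)) ((2*m-4*k-2)+2) + rf (μ+α+β+((2*k:ℕ):ℝ)) ((2*m-4*k-2)+2) with hS0bd
  have hstep : P2 * S1b * S0b ≤ P1 * S1a * S0b := by
    calc P2 * S1b * S0b = (P2 * S0b) * S1b := by ring
      _ ≤ (P1 * S0a) * S1b := mul_le_mul_of_nonneg_right h hS1_2nn
      _ = P1 * (S1b * S0a) := by ring
      _ ≤ P1 * (S1a * S0b) := mul_le_mul_of_nonneg_left hrc hP1pos.le
      _ = P1 * S1a * S0b := by ring
  exact le_of_mul_le_mul_right hstep hS0_2pos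

lemma Xi_chain (μ α β : ℝ) (hμ : 0 < μ) (hα : 0 < α) (hβ : 0 < β) (hab : α ≤ β)
    (m k0 : ℕ) (hk0 : 1 ≤ k0) (h0 : 0 ≤ XiF μ α β m k0) :
    ∀ k, k0 ≤ k → 2*k ≤ m → 0 ≤ XiF μ α β m k := by
  intro k hk
  induction k, hk using Nat.le_induction with
  | base => exact fun _ => h0
  | succ n hn ih =>
      intro h2
      exact Xi_step μ α β hμ hα hβ hab m n (le_trans hk0 hn) h2 (ih (by omega))

lemma psi_nonneg_mu0 (α β : ℝ) (hα : 0 < α) (hβ : 0 < β) (m k : ℕ) (hk : 1 ≤ k) :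
    0 ≤ psiF 0 α β m k := by
  rw [psiF]
  have hz : rf 0 (2*k) = 0 := by
    rw [show 2*k = (2*k-1)+1 by omega]; exact rf_base_zero _
  rw [hz, zero_mul, sub_zero]
  apply div_nonneg
  · exact mul_nonneg (rf_nonneg (by linarith) _) (rf_nonneg (by linarith) _)
  · positivity

lemma T_nonneg (μ α β : ℝ) (hμ : 0 ≤ μ) (hα : 0 < α) (hβ : 0 < β) (hab : α ≤ β)
    (m j : ℕ) (hj1 : 1 ≤ j) (hj : 2*j ≤ m) : 0 ≤ ∑ k ∈ Finset.Icc j (m-j), psiF μ α β m k := by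
  have hm1 : 1 ≤ m := by omega
  rcases eq_or_lt_of_le hμ with hμ0 | hμpos
  · apply Finset.sum_nonneg
    intro k hk
    have hk1 : 1 ≤ k := le_trans hj1 (Finset.mem_Icc.mp hk).1
    rw [← hμ0]
    exact psi_nonneg_mu0 α β hα hβ m k hk1
  · by_cases hC : ∀ k, 1 ≤ k → k < j → XiF μ α β m k ≤ 0
    · have hdec1 : ∑ k ∈ Finset.Ico 1 j, psiF μ α β m k
          + ∑ k ∈ Finset.Ico j (m-j+1), psiF μ α β m k
          = ∑ k ∈ Finset.Ico 1 (m-j+1), psiF μ α β m k :=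
        Finset.sum_Ico_consecutive _ (by omega) (by omega)
      have hdec2 : ∑ k ∈ Finset.Ico 1 (m-j+1), psiF μ α β m k
          + ∑ k ∈ Finset.Ico (m-j+1) m, psiF μ α β m k
          = ∑ k ∈ Finset.Ico 1 m, psiF μ α β m k :=
        Finset.sum_Ico_consecutive _ (by omega) (by omega)
      have hrefl : ∑ k ∈ Finset.Ico (m-j+1) m, psiF μ α β m k
          = ∑ k ∈ Finset.Ico 1 j, psiF μ α β m (m-k) := by
        apply Finset.sum_nbij' (fun k => m - k) (fun k => m - k)
        · intro a ha
          have := Finset.mem_Ico.mp ha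
          exact Finset.mem_Ico.mpr (by omega)
        · intro a ha
          have := Finset.mem_Ico.mp ha
          exact Finset.mem_Ico.mpr (by omega)
        · intro a ha
          have := Finset.mem_Ico.mp ha
          omega
        · intro a ha
          have := Finset.mem_Ico.mp ha
          omega
        · intro a ha
          have := Finset.mem_Ico.mp ha
          rw [show m - (m - a) = a by omega]
      have hT1 : 0 ≤ ∑ k ∈ Finset.Ico 1 m, psiF μ α β m k := by
        have h := T1_nonneg μ α β hμ hα hβ hab hm1
        rw [show Finset.Icc 1 (m-1) = Finset.Ico 1 m from by
          rw [← Finset.Ico_add_one_right_eq_Icc]; congr 1; omega] at h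
        exact h
      have hpairs : ∑ k ∈ Finset.Ico 1 j, (psiF μ α β m k + psiF μ α β m (m-k)) ≤ 0 := by
        apply Finset.sum_nonpos
        intro k hk
        obtain ⟨hk1, hkj⟩ := Finset.mem_Ico.mp hk
        rw [psi_pair μ α β m k (by omega)]
        apply div_nonpos_of_nonpos_of_nonneg
        · exact hC k hk1 hkj
        · positivity
      have hsum_add : ∑ k ∈ Finset.Ico 1 j, (psiF μ α β m k + psiF μ α β m (m-k))
          = ∑ k ∈ Finset.Ico 1 j, psiF μ α β m k + ∑ k ∈ Finset.Ico 1 j, psiF μ α β m (m-k) :=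
        Finset.sum_add_distrib
      have hIcc : Finset.Icc j (m-j) = Finset.Ico j (m-j+1) := by
        rw [Finset.Ico_add_one_right_eq_Icc]
      rw [hIcc]
      linarith [hdec1, hdec2, hrefl, hpairs, hT1, hsum_add]
    · push_neg at hC
      obtain ⟨k0, hk01, hk0j, hk0pos⟩ := hC
      have hXi : ∀ k ∈ Finset.Icc j (m-j), 0 ≤ XiF μ α β m k := by
        intro k hk
        obtain ⟨hjk, hkm⟩ := Finset.mem_Icc.mp hk
        rcases le_or_gt (2*k) m with h2 | h2
        · exact Xi_chain μ α β hμpos hα hβ hab m k0 hk01 hk0pos.le k (by omega) h2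
        · rw [← Xi_symm μ α β m k (by omega)]
          exact Xi_chain μ α β hμpos hα hβ hab m k0 hk01 hk0pos.le (m-k) (by omega) (by omega)
      have hrefl2 : ∑ k ∈ Finset.Icc j (m-j), psiF μ α β m k
          = ∑ k ∈ Finset.Icc j (m-j), psiF μ α β m (m-k) := by
        apply Finset.sum_nbij' (fun k => m - k) (fun k => m - k)
        · intro a ha
          have := Finset.mem_Icc.mp ha
          exact Finset.mem_Icc.mpr (by omega)
        · intro a ha
          have := Finset.mem_Icc.mp ha
          exact Finset.mem_Icc.mpr (by omega)
        · intro a ha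
          have := Finset.mem_Icc.mp ha
          omega
        · intro a ha
          have := Finset.mem_Icc.mp ha
          omega
        · intro a ha
          have := Finset.mem_Icc.mp ha
          rw [show m - (m - a) = a by omega]
      have h2T : ∑ k ∈ Finset.Icc j (m-j), (psiF μ α β m k + psiF μ α β m (m-k))
          = ∑ k ∈ Finset.Icc j (m-j), psiF μ α β m k
            + ∑ k ∈ Finset.Icc j (m-j), psiF μ α β m (m-k) :=
        Finset.sum_add_distrib
      have hnn : 0 ≤ ∑ k ∈ Finset.Icc j (m-j), (psiF μ α β m k + psiF μ α β m (m-k)) := by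
        apply Finset.sum_nonneg
        intro k hk
        have hkm : k ≤ m := by
          have := (Finset.mem_Icc.mp hk).2; omega
        rw [psi_pair μ α β m k hkm]
        exact div_nonneg (hXi k hk) (by positivity)
      linarith [hrefl2, h2T, hnn]

lemma lc_step (f : ℕ → ℝ) (hf : IsLogConcaveSeq (fun n => f (n + 1))) :
    ∀ d b : ℕ, f (b+1) * f (b+d+2) ≤ f (b+2) * f (b+d+1) := by
  obtain ⟨hnn, -, hlc, hsupp⟩ := hf
  have fnn : ∀ i, 1 ≤ i → 0 ≤ f i := by
    intro i hi
    obtain ⟨q, rfl⟩ : ∃ q, i = q+1 := ⟨i-1, by omega⟩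
    exact hnn q
  intro d
  induction d with
  | zero =>
      intro b
      rw [show b+0+2 = b+2 by omega, show b+0+1 = b+1 by omega]
      exact le_of_eq (mul_comm _ _)
  | succ d ih =>
      intro b
      rw [show b+(d+1)+2 = b+d+3 by omega, show b+(d+1)+1 = b+d+2 by omega]
      by_cases hz : f (b+d+2) = 0
      · have hz' : (fun n => f (n+1)) (b+d+1) = 0 := by
          simp only
          rw [show b+d+1+1 = b+d+2 by omega]
          exact hz
        rcases hsupp (b+d+1) hz' with h1 | h2
        · have h3 : f (b+d+3) = 0 := by
            have := h1 1
            simp only at this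
            rw [show b+d+1+1+1 = b+d+3 by omega] at this
            exact this
          rw [h3, mul_zero]
          exact mul_nonneg (fnn _ (by omega)) (fnn _ (by omega))
        · have h3 : f (b+1) = 0 := by
            have := h2 (d+1) (by omega)
            simp only at this
            rw [show b+d+1-(d+1)+1 = b+1 by omega] at this
            exact this
          rw [h3, zero_mul]
          exact mul_nonneg (fnn _ (by omega)) (fnn _ (by omega))
      · have hpos : 0 < f (b+d+2) := lt_of_le_of_ne (fnn _ (by omega)) (Ne.symm hz)
        have hIH := ih b
        have hLC : f (b+d+1) * f (b+d+3) ≤ f (b+d+2)^2 := by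
          have := hlc (b+d)
          simp only at this
          rw [show b+d+1 = b+d+1 from rfl, show b+d+2+1 = b+d+3 by omega,
            show b+d+1+1 = b+d+2 by omega] at this
          exact this
        have h3 : f (b+1) * f (b+d+3) * f (b+d+2) ≤ f (b+2) * f (b+d+2) * f (b+d+2) := by
          calc f (b+1) * f (b+d+3) * f (b+d+2) = (f (b+1) * f (b+d+2)) * f (b+d+3) := by ring
            _ ≤ (f (b+2) * f (b+d+1)) * f (b+d+3) :=
                mul_le_mul_of_nonneg_right hIH (fnn _ (by omega))
            _ = f (b+2) * (f (b+d+1) * f (b+d+3)) := by ring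
            _ ≤ f (b+2) * (f (b+d+2)^2) :=
                mul_le_mul_of_nonneg_left hLC (fnn _ (by omega))
            _ = f (b+2) * f (b+d+2) * f (b+d+2) := by ring
        exact le_of_mul_le_mul_right h3 hpos

lemma ccmono (f : ℕ → ℝ) (hf : IsLogConcaveSeq (fun n => f (n + 1))) (m : ℕ) :
    ∀ j, 2*(j+1) ≤ m →
    (if j = 0 then (0:ℝ) else f j * f (m-j)) ≤ f (j+1) * f (m-(j+1)) := by
  have fnn : ∀ i, 1 ≤ i → 0 ≤ f i := by
    intro i hi
    obtain ⟨q, rfl⟩ : ∃ q, i = q+1 := ⟨i-1, by omega⟩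
    exact hf.1 q
  intro j hj
  by_cases hj0 : j = 0
  · subst hj0
    rw [if_pos rfl]
    exact mul_nonneg (fnn 1 (by omega)) (fnn (m-1) (by omega))
  · rw [if_neg hj0]
    obtain ⟨b, rfl⟩ : ∃ b, j = b+1 := ⟨j-1, by omega⟩
    have e1 : m - (b+1) = b+(m-2*b-3)+2 := by omega
    have e2 : m - (b+1+1) = b+(m-2*b-3)+1 := by omega
    rw [e1, e2, show b+1+1 = b+2 by omega]
    exact lc_step f hf (m-2*b-3) b

lemma key (f : ℕ → ℝ) (hf : IsLogConcaveSeq (fun n => f (n + 1))) (μ α β : ℝ)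
    (hμ : 0 ≤ μ) (hα : 0 < α) (hβ : 0 < β) (hab : α ≤ β) (m : ℕ) :
    0 ≤ ∑ k ∈ Finset.range (m + 1),
      (coeff f k (μ + α) * coeff f (m - k) (μ + β) - coeff f k μ * coeff f (m - k) (μ + α + β)) := by
  have hsub : Finset.Ioo 0 m ⊆ Finset.range (m+1) := by
    intro x hx
    have := Finset.mem_Ioo.mp hx
    exact Finset.mem_range.mpr (by omega)
  have hzero : ∀ x ∈ Finset.range (m+1), x ∉ Finset.Ioo 0 m →
      coeff f x (μ + α) * coeff f (m - x) (μ + β) - coeff f x μ * coeff f (m - x) (μ + α + β) = 0 := by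
    intro x hx hnx
    have hx' := Finset.mem_range.mp hx
    have : x = 0 ∨ x = m := by
      by_contra hcon
      push_neg at hcon
      exact hnx (Finset.mem_Ioo.mpr (by omega))
    rcases this with rfl | rfl
    · simp [coeff]
    · simp [coeff, Nat.sub_self]
  have hred : ∑ k ∈ Finset.range (m + 1),
      (coeff f k (μ + α) * coeff f (m - k) (μ + β) - coeff f k μ * coeff f (m - k) (μ + α + β))
      = ∑ k ∈ Finset.Ioo 0 m, (f k * f (m-k)) * psiF μ α β m k := by
    rw [← Finset.sum_subset hsub hzero]
    apply Finset.sum_congr rfl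
    intro k hk
    obtain ⟨hk0, hkm⟩ := Finset.mem_Ioo.mp hk
    rw [coeff, coeff, coeff, coeff, if_neg (by omega), if_neg (by omega), if_neg (by omega),
      if_neg (by omega), psiF]
    have d1 : ((2*k-1).factorial : ℝ) ≠ 0 := by positivity
    have d2 : ((2*(m-k)-1).factorial : ℝ) ≠ 0 := by positivity
    field_simp
  rw [hred]
  have habel : ∑ k ∈ Finset.Ioo 0 m, (f k * f (m-k)) * psiF μ α β m k
      = ∑ j ∈ Finset.range (m/2),
          ((if j+1 = 0 then (0:ℝ) else f (j+1) * f (m-(j+1))) - (if j = 0 then (0:ℝ) else f j * f (m-j)))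
            * ∑ k ∈ Finset.Icc (j+1) (m-(j+1)), psiF μ α β m k := by
    have step1 : ∀ j ∈ Finset.range (m/2),
        ((if j+1 = 0 then (0:ℝ) else f (j+1) * f (m-(j+1))) - (if j = 0 then (0:ℝ) else f j * f (m-j)))
            * ∑ k ∈ Finset.Icc (j+1) (m-(j+1)), psiF μ α β m k
        = ∑ k ∈ Finset.Ioo 0 m, (if j+1 ≤ k ∧ k ≤ m-(j+1) then
            ((if j+1 = 0 then (0:ℝ) else f (j+1) * f (m-(j+1))) - (if j = 0 then (0:ℝ) else f j * f (m-j)))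
              * psiF μ α β m k else 0) := by
      intro j hj
      have hj' := Finset.mem_range.mp hj
      rw [Finset.mul_sum]
      rw [show Finset.Icc (j+1) (m-(j+1))
          = (Finset.Ioo 0 m).filter (fun k => j+1 ≤ k ∧ k ≤ m-(j+1)) from by
        ext x
        simp only [Finset.mem_Icc, Finset.mem_filter, Finset.mem_Ioo]
        omega]
      rw [Finset.sum_filter]
    rw [Finset.sum_congr rfl step1, Finset.sum_comm]
    apply Finset.sum_congr rfl
    intro k hk
    obtain ⟨hk0, hkm⟩ := Finset.mem_Ioo.mp hk
    rw [← Finset.sum_filter]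
    rw [show (Finset.range (m/2)).filter (fun j => j+1 ≤ k ∧ k ≤ m-(j+1))
        = Finset.range (min k (m-k)) from by
      ext x
      simp only [Finset.mem_filter, Finset.mem_range]
      omega]
    rw [← Finset.sum_mul]
    congr 1
    rw [Finset.sum_range_sub (fun j => if j = 0 then (0:ℝ) else f j * f (m-j)) (min k (m-k))]
    rcases le_total k (m-k) with h | h
    · rw [min_eq_left h, if_neg (by omega)]
      norm_num
    · rw [min_eq_right h, if_neg (by omega), show m-(m-k) = k by omega]
      norm_num
      ring
  rw [habel]
  apply Finset.sum_nonneg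
  intro j hj
  have hjm : 2*(j+1) ≤ m := by
    have := Finset.mem_range.mp hj; omega
  apply mul_nonneg
  · rw [sub_nonneg, if_neg (Nat.succ_ne_zero j)]
    exact ccmono f hf m j hjm
  · exact T_nonneg μ α β hμ hα hβ hab m (j+1) (by omega) hjm

end RF

theorem stmt_9 (f : ℕ → ℝ) (hf : IsLogConcaveSeq (fun n => f (n + 1)))
    (μ α β : ℝ) (hμ : 0 ≤ μ) (hα : 0 < α) (hβ : 0 < β) (m : ℕ) :
    0 ≤ ∑ k ∈ Finset.range (m + 1),
      (coeff f k (μ + α) * coeff f (m - k) (μ + β)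
        - coeff f k μ * coeff f (m - k) (μ + α + β)) := by
  rcases le_total α β with h | h
  · exact RF.key f hf μ α β hμ hα hβ h m
  · have h2 := RF.key f hf μ β α hμ hβ hα h m
    have h3 : ∑ k ∈ Finset.range (m + 1),
        (coeff f k (μ + β) * coeff f (m - k) (μ + α) - coeff f k μ * coeff f (m - k) (μ + β + α))
        = ∑ k ∈ Finset.range (m + 1),
        (coeff f k (μ + α) * coeff f (m - k) (μ + β) - coeff f k μ * coeff f (m - k) (μ + α + β)) := by
      rw [Finset.sum_sub_distrib, Finset.sum_sub_distrib]
      congr 1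
      · rw [← Finset.sum_range_reflect]
        apply Finset.sum_congr rfl
        intro k hk
        have hk' : k ≤ m := by
          have := Finset.mem_range.mp hk; omega
        rw [show m + 1 - 1 - k = m - k by omega, show m - (m - k) = k by omega]
        ring
      · apply Finset.sum_congr rfl
        intro k _
        rw [show μ + β + α = μ + α + β by ring]
    linarith [h2, h3]
end

section
/- Let r ≥ 1 be an integer and {f_n}_{n≥0} an arbitrary nonnegative real sequence. Then for every μ > 0, every α, β > 0, and every integer m ≥ 0, Σ_{k=0}^{m} f_k f_{m−k} [ Γ(μ+α+rk)Γ(μ+β+r(m−k)) − Γ(μ+rk)Γ(μ+α+β+r(m−k)) ] ≤ 0, where Γ is Euler's gamma function. In other words, the formal power series μ ↦ Σ_{n≥0} f_n Γ(μ+rn) x^n is coefficient-wise log-convex. -/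
open Real Finset

private lemma gamma_conv (x s t : ℝ) (hx : 0 < x) (hs : 0 < s) (ht : 0 ≤ t) (ht1 : t ≤ 1) :
    Real.Gamma (x + (1 - t) * s) ≤ Real.Gamma x ^ t * Real.Gamma (x + s) ^ (1 - t) := by
  have hxs : 0 < x + s := by linarith
  have hmem : 0 < x + (1 - t) * s := by nlinarith
  have h := (Real.convexOn_log_Gamma).2 (Set.mem_Ioi.2 hx) (Set.mem_Ioi.2 hxs) ht
    (by linarith : (0:ℝ) ≤ 1 - t) (by ring)
  simp only [smul_eq_mul, Function.comp] at h
  have harg : t * x + (1 - t) * (x + s) = x + (1 - t) * s := by ring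
  rw [harg] at h
  calc Real.Gamma (x + (1 - t) * s)
      = Real.exp (Real.log (Real.Gamma (x + (1 - t) * s))) :=
        (Real.exp_log (Real.Gamma_pos_of_pos hmem)).symm
    _ ≤ Real.exp (t * Real.log (Real.Gamma x) + (1 - t) * Real.log (Real.Gamma (x + s))) :=
        Real.exp_le_exp.2 h
    _ = Real.Gamma x ^ t * Real.Gamma (x + s) ^ (1 - t) := by
        rw [Real.exp_add, Real.rpow_def_of_pos (Real.Gamma_pos_of_pos hx),
          Real.rpow_def_of_pos (Real.Gamma_pos_of_pos hxs)]
        ring_nf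

private lemma gamma_key (x y α β : ℝ) (hx : 0 < x) (hy : 0 < y) (hα : 0 < α) (hβ : 0 < β) :
    Real.Gamma (x + α) * Real.Gamma (y + β) + Real.Gamma (x + β) * Real.Gamma (y + α) ≤
      Real.Gamma x * Real.Gamma (y + α + β) + Real.Gamma (x + α + β) * Real.Gamma y := by
  have hs : 0 < α + β := by linarith
  set s := α + β with hs_def
  set t := β / s with ht_def
  have ht : 0 ≤ t := div_nonneg hβ.le hs.le
  have ht1 : t ≤ 1 := by rw [ht_def, div_le_one hs]; linarith
  have e1 : (1 - t) * s = α := by rw [ht_def, sub_mul, div_mul_cancel₀ _ hs.ne']; rw [hs_def]; ring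
  have e2 : (1 - (1 - t)) * s = β := by rw [ht_def, sub_sub_cancel, div_mul_cancel₀ _ hs.ne']
  have hA : 0 < Real.Gamma x * Real.Gamma (y + s) :=
    mul_pos (Real.Gamma_pos_of_pos hx) (Real.Gamma_pos_of_pos (by linarith))
  have hB : 0 < Real.Gamma (x + s) * Real.Gamma y :=
    mul_pos (Real.Gamma_pos_of_pos (by linarith)) (Real.Gamma_pos_of_pos hy)
  -- four log-convexity bounds
  have h1 : Real.Gamma (x + α) ≤ Real.Gamma x ^ t * Real.Gamma (x + s) ^ (1 - t) := by
    have := gamma_conv x s t hx hs ht ht1; rwa [e1] at this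
  have h2 : Real.Gamma (y + β) ≤ Real.Gamma y ^ (1 - t) * Real.Gamma (y + s) ^ (1 - (1 - t)) := by
    have := gamma_conv y s (1 - t) hy hs (by linarith) (by linarith); rwa [e2] at this
  have h3 : Real.Gamma (x + β) ≤ Real.Gamma x ^ (1 - t) * Real.Gamma (x + s) ^ (1 - (1 - t)) := by
    have := gamma_conv x s (1 - t) hx hs (by linarith) (by linarith); rwa [e2] at this
  have h4 : Real.Gamma (y + α) ≤ Real.Gamma y ^ t * Real.Gamma (y + s) ^ (1 - t) := by
    have := gamma_conv y s t hy hs ht ht1; rwa [e1] at this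
  have e3 : (1 : ℝ) - (1 - t) = t := by ring
  rw [e3] at h2 h3
  -- products
  have hP1 : Real.Gamma (x + α) * Real.Gamma (y + β) ≤
      (Real.Gamma x * Real.Gamma (y + s)) ^ t * (Real.Gamma (x + s) * Real.Gamma y) ^ (1 - t) := by
    have := mul_le_mul h1 h2 (Real.Gamma_pos_of_pos (by linarith : (0:ℝ) < y + β)).le
      (by positivity)
    calc Real.Gamma (x + α) * Real.Gamma (y + β)
        ≤ (Real.Gamma x ^ t * Real.Gamma (x + s) ^ (1 - t)) *
          (Real.Gamma y ^ (1 - t) * Real.Gamma (y + s) ^ t) := this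
      _ = (Real.Gamma x * Real.Gamma (y + s)) ^ t * (Real.Gamma (x + s) * Real.Gamma y) ^ (1 - t) := by
          rw [Real.mul_rpow (Real.Gamma_pos_of_pos hx).le
              (Real.Gamma_pos_of_pos (by linarith : (0:ℝ) < y + s)).le,
            Real.mul_rpow (Real.Gamma_pos_of_pos (by linarith : (0:ℝ) < x + s)).le
              (Real.Gamma_pos_of_pos hy).le]
          ring
  have hP2 : Real.Gamma (x + β) * Real.Gamma (y + α) ≤
      (Real.Gamma x * Real.Gamma (y + s)) ^ (1 - t) * (Real.Gamma (x + s) * Real.Gamma y) ^ t := by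
    have := mul_le_mul h3 h4 (Real.Gamma_pos_of_pos (by linarith : (0:ℝ) < y + α)).le
      (by positivity)
    calc Real.Gamma (x + β) * Real.Gamma (y + α)
        ≤ (Real.Gamma x ^ (1 - t) * Real.Gamma (x + s) ^ t) *
          (Real.Gamma y ^ t * Real.Gamma (y + s) ^ (1 - t)) := this
      _ = (Real.Gamma x * Real.Gamma (y + s)) ^ (1 - t) * (Real.Gamma (x + s) * Real.Gamma y) ^ t := by
          rw [Real.mul_rpow (Real.Gamma_pos_of_pos hx).le
              (Real.Gamma_pos_of_pos (by linarith : (0:ℝ) < y + s)).le,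
            Real.mul_rpow (Real.Gamma_pos_of_pos (by linarith : (0:ℝ) < x + s)).le
              (Real.Gamma_pos_of_pos hy).le]
          ring
  have hG1 := Real.geom_mean_le_arith_mean2_weighted ht (by linarith : (0:ℝ) ≤ 1 - t)
    hA.le hB.le (by ring)
  have hG2 := Real.geom_mean_le_arith_mean2_weighted (by linarith : (0:ℝ) ≤ 1 - t) ht
    hB.le hA.le (by ring)
  -- hG2 : B^(1-t) * A^t ≤ (1-t)*B + t*A ; match hP2's A^(1-t)*B^t: redo with swapped
  have hG2' := Real.geom_mean_le_arith_mean2_weighted (by linarith : (0:ℝ) ≤ 1 - t) ht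
    hA.le hB.le (by ring)
  have hys : y + s = y + α + β := by rw [hs_def]; ring
  have hxs : x + s = x + α + β := by rw [hs_def]; ring
  rw [hys] at hA hP1 hP2 hG1 hG2'
  rw [hxs] at hB hP1 hP2 hG1 hG2'
  nlinarith [hP1, hP2, hG1, hG2']

theorem stmt_11 (r : ℕ) (hr : 1 ≤ r) (f : ℕ → ℝ) (hf : ∀ n, 0 ≤ f n)
    (μ α β : ℝ) (hμ : 0 < μ) (hα : 0 < α) (hβ : 0 < β) (m : ℕ) :
    ∑ k ∈ Finset.range (m + 1), f k * f (m - k) *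
      (Real.Gamma (μ + α + (r * k : ℕ)) * Real.Gamma (μ + β + (r * (m - k) : ℕ))
        - Real.Gamma (μ + (r * k : ℕ)) * Real.Gamma (μ + α + β + (r * (m - k) : ℕ))) ≤ 0 := by
  set T : ℕ → ℝ := fun k => f k * f (m - k) *
      (Real.Gamma (μ + α + (r * k : ℕ)) * Real.Gamma (μ + β + (r * (m - k) : ℕ))
        - Real.Gamma (μ + (r * k : ℕ)) * Real.Gamma (μ + α + β + (r * (m - k) : ℕ))) with hT
  have hrefl : ∑ k ∈ range (m + 1), T (m - k) = ∑ k ∈ range (m + 1), T k := by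
    have := Finset.sum_range_reflect T (m + 1)
    simpa using this
  have hpair : ∀ k ∈ range (m + 1), T k + T (m - k) ≤ 0 := by
    intro k hk
    have hk' : k ≤ m := Nat.lt_succ_iff.1 (Finset.mem_range.1 hk)
    have hsub : m - (m - k) = k := Nat.sub_sub_self hk'
    set c : ℝ := ((r * k : ℕ) : ℝ) with hc
    set d : ℝ := ((r * (m - k) : ℕ) : ℝ) with hd
    have hc0 : 0 ≤ c := by positivity
    have hd0 : 0 ≤ d := by positivity
    have key := gamma_key (μ + c) (μ + d) α β (by linarith) (by linarith) hα hβ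
    have hP : 0 ≤ f k * f (m - k) := mul_nonneg (hf k) (hf (m - k))
    have eT : T k + T (m - k) = f k * f (m - k) *
        ((Real.Gamma (μ + c + α) * Real.Gamma (μ + d + β)
          + Real.Gamma (μ + c + β) * Real.Gamma (μ + d + α))
        - (Real.Gamma (μ + c) * Real.Gamma (μ + d + α + β)
          + Real.Gamma (μ + c + α + β) * Real.Gamma (μ + d))) := by
      rw [hT]
      simp only [hsub]
      rw [← hc, ← hd]
      have a1 : μ + α + c = μ + c + α := by ring
      have a2 : μ + β + d = μ + d + β := by ring
      have a3 : μ + α + β + d = μ + d + α + β := by ring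
      have a4 : μ + α + d = μ + d + α := by ring
      have a5 : μ + β + c = μ + c + β := by ring
      have a6 : μ + α + β + c = μ + c + α + β := by ring
      rw [a1, a2, a3, a4, a5, a6]
      ring
    rw [eT]
    have : μ + c + α = (μ + c) + α := by ring
    exact mul_nonpos_of_nonneg_of_nonpos hP (by linarith [key])
  have h2 : (∑ k ∈ range (m + 1), T k) + (∑ k ∈ range (m + 1), T (m - k)) ≤ 0 := by
    rw [← Finset.sum_add_distrib]
    exact Finset.sum_nonpos hpair
  rw [hrefl] at h2
  linarith
end

section
/- For every real μ > 0 and every real x with 0 < x < 1/4, the series λ(μ;x) = Σ_{k=0}^{∞} (μ)_{2k} x^k / ( (μ+1)_k k! ) converges and its sum equals ( (1 − √(1−4x)) / (2x) )^{μ}. Consequently, λ(α;x)·λ(β;x) = λ(α+β;x) for all α, β > 0. -/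
set_option maxHeartbeats 1000000


/-- The terms of the hypergeometric series `λ(μ;x) = Σ_k (μ)_{2k} x^k / ((μ+1)_k k!)`. -/
noncomputable def lambdaTerm (μ x : ℝ) (k : ℕ) : ℝ :=
  risingFactorial μ (2 * k) * x ^ k / (risingFactorial (μ + 1) k * (Nat.factorial k : ℝ))

noncomputable def bTerm (μ x : ℝ) (k : ℕ) : ℝ :=
  risingFactorial (μ + 1 + k) k * x ^ k / (Nat.factorial k : ℝ)

lemma rf_pos_s13 {μ : ℝ} (hμ : 0 < μ) : ∀ n, 0 < risingFactorial μ n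
  | 0 => one_pos
  | n + 1 => mul_pos (rf_pos_s13 hμ n) (by positivity)

lemma rf_succ_left (μ : ℝ) : ∀ n, risingFactorial μ (n + 1) = μ * risingFactorial (μ + 1) n
  | 0 => by simp [risingFactorial]
  | n + 1 => by
    show risingFactorial μ (n+1) * (μ + (n+1 : ℕ)) = μ * (risingFactorial (μ+1) n * (μ + 1 + n))
    rw [rf_succ_left μ n]; push_cast; ring

lemma rf_add_s13 (μ : ℝ) (m : ℕ) : ∀ n, risingFactorial μ (m + n)
    = risingFactorial μ m * risingFactorial (μ + m) n
  | 0 => by simp [risingFactorial]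
  | n + 1 => by
    show risingFactorial μ (m + n) * (μ + (m + n : ℕ))
      = risingFactorial μ m * (risingFactorial (μ + m) n * (μ + m + n))
    rw [rf_add_s13 μ m n]; push_cast; ring

lemma aT_succ {μ : ℝ} (hμ : 0 < μ) (x : ℝ) (k : ℕ) :
    lambdaTerm μ x (k+1) = lambdaTerm μ x k * ((μ + 2*k) * (μ + 2*k + 1) * x) / ((μ + 1 + k) * (k + 1)) := by
  have h1 : 2 * (k+1) = (2*k) + 1 + 1 := by ring
  have hd1 : (0:ℝ) < risingFactorial (μ+1) k := rf_pos_s13 (by linarith) k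
  have hd2 : (0:ℝ) < (Nat.factorial k : ℝ) := by positivity
  have hd3 : (0:ℝ) < μ + 1 + k := by positivity
  unfold lambdaTerm
  rw [h1]
  show risingFactorial μ (2*k) * (μ + ↑(2*k)) * (μ + ↑(2*k+1)) * x ^ (k+1) /
      (risingFactorial (μ+1) k * (μ+1+↑k) * ↑(Nat.factorial (k+1))) = _
  rw [Nat.factorial_succ]
  push_cast
  field_simp
  ring

lemma bT_succ {μ : ℝ} (hμ : 0 < μ) (x : ℝ) (k : ℕ) :
    bTerm μ x (k+1) = bTerm μ x k * ((μ + 2*k + 1) * (μ + 2*k + 2) * x) / ((μ + 1 + k) * (k + 1)) := by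
  have hd3 : (0:ℝ) < μ + 1 + k := by positivity
  have hc : (μ + 1 + ((k+1:ℕ):ℝ)) = (μ + 1 + k) + 1 := by push_cast; ring
  have e1 : risingFactorial (μ+1+k) (k + 2) = (μ+1+k) * risingFactorial ((μ+1+k) + 1) (k + 1) :=
    rf_succ_left _ _
  have e2 : risingFactorial (μ+1+k) (k + 2)
      = risingFactorial (μ+1+k) k * ((μ + 2*k + 1) * (μ + 2*k + 2)) := by
    show risingFactorial (μ+1+k) k * ((μ+1+k) + (k:ℕ)) * ((μ+1+k) + ((k+1:ℕ):ℝ)) = _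
    push_cast; ring
  have key : (μ+1+k) * risingFactorial ((μ+1+k) + 1) (k + 1)
      = risingFactorial (μ+1+k) k * ((μ + 2*k + 1) * (μ + 2*k + 2)) := e1 ▸ e2
  unfold bTerm
  rw [hc, Nat.factorial_succ]
  have h5 : risingFactorial (μ + 1 + (k:ℝ) + 1) (k+1)
      = risingFactorial (μ+1+k) k * ((μ + 2*k + 1) * (μ + 2*k + 2)) / (μ+1+k) := by
    rw [eq_div_iff (ne_of_gt hd3)]
    linear_combination key
  rw [h5]
  push_cast
  field_simp
  ring

lemma id1 {μ : ℝ} (hμ : 0 < μ) (x : ℝ) (k : ℕ) :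
    (μ + 2*k) * lambdaTerm μ x k = μ * bTerm μ x k := by
  have key : risingFactorial μ (2*k) * (μ + 2*k)
      = μ * (risingFactorial (μ+1) k * risingFactorial (μ + 1 + k) k) := by
    have e1 : risingFactorial μ (2*k + 1) = risingFactorial μ (2*k) * (μ + (2*k:ℕ)) := rfl
    have e2 : risingFactorial μ (2*k + 1) = μ * risingFactorial (μ+1) (2*k) := rf_succ_left _ _
    have e3 : risingFactorial (μ+1) (2*k) = risingFactorial (μ+1) k * risingFactorial (μ+1+k) k := by
      rw [show 2*k = k + k by ring, rf_add_s13]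
    push_cast at e1
    rw [e3] at e2
    linarith [e1.symm.trans e2]
  have hd1 : (0:ℝ) < risingFactorial (μ+1) k := rf_pos_s13 (by linarith) k
  have hd2 : (0:ℝ) < (Nat.factorial k : ℝ) := by positivity
  unfold lambdaTerm bTerm
  field_simp
  linear_combination x^k * key

lemma aT_pos {μ : ℝ} (hμ : 0 < μ) {x : ℝ} (hx : 0 < x) (k : ℕ) : 0 < lambdaTerm μ x k := by
  unfold lambdaTerm
  have := rf_pos_s13 hμ (2*k); have := rf_pos_s13 (show (0:ℝ) < μ+1 by linarith) k
  positivity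

lemma bT_pos {μ : ℝ} (hμ : 0 < μ) {x : ℝ} (hx : 0 < x) (k : ℕ) : 0 < bTerm μ x k := by
  unfold bTerm
  have : (0:ℝ) < risingFactorial (μ+1+k) k := rf_pos_s13 (by positivity) k
  positivity

lemma aT_zero (μ x : ℝ) : lambdaTerm μ x 0 = 1 := by
  simp [lambdaTerm, risingFactorial]

lemma bT_zero (μ x : ℝ) : bTerm μ x 0 = 1 := by
  simp [bTerm, risingFactorial]

lemma id2 {μ : ℝ} (hμ : 0 < μ) (x : ℝ) (k : ℕ) :
    (μ + 2*(k+1)) * bTerm μ x (k+1)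
      = μ * lambdaTerm μ x (k+1) + 4*(μ + 2*k + 1) * x * bTerm μ x k := by
  have hd3 : (0:ℝ) < μ + 1 + k := by positivity
  have hk1 : (0:ℝ) < (k:ℝ) + 1 := by positivity
  have hb : bTerm μ x k = (μ + 2*k) * lambdaTerm μ x k / μ := by
    rw [eq_div_iff (ne_of_gt hμ)]; linear_combination -(id1 hμ x k)
  rw [aT_succ hμ x k, bT_succ hμ x k, hb]
  field_simp
  ring

open Filter Topology

lemma tendsto_lin (a p q : ℝ) :
    Tendsto (fun k : ℕ => (a*(k:ℝ)+p)/((k:ℝ)+q)) atTop (𝓝 a) := by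
  have h1 : Tendsto (fun k : ℕ => (k:ℝ) + q) atTop atTop :=
    tendsto_atTop_add_const_right _ q tendsto_natCast_atTop_atTop
  have h2 : Tendsto (fun k : ℕ => a + (p - a*q) * ((k:ℝ) + q)⁻¹) atTop (𝓝 (a + (p - a*q) * 0)) :=
    tendsto_const_nhds.add (tendsto_const_nhds.mul h1.inv_tendsto_atTop)
  rw [mul_zero, add_zero] at h2
  apply h2.congr'
  filter_upwards [h1.eventually_gt_atTop 0] with k hk
  field_simp
  ring

lemma summable_pos_ratio {f : ℕ → ℝ} (hpos : ∀ k, 0 < f (k+1)) {L : ℝ} (hL : L < 1)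
    (T : Tendsto (fun k => f (k+1+1) / f (k+1)) atTop (𝓝 L)) : Summable f := by
  rw [← summable_nat_add_iff 1]
  apply summable_of_ratio_test_tendsto_lt_one hL
    (Eventually.of_forall fun k => (hpos k).ne')
  apply T.congr
  intro k
  rw [Real.norm_eq_abs, Real.norm_eq_abs, abs_of_pos (hpos (k+1)), abs_of_pos (hpos k)]

lemma summable_aT {μ x : ℝ} (hμ : 0 < μ) (hx : 0 < x) (hx4 : x < 1/4) :
    Summable (lambdaTerm μ x) := by
  apply summable_pos_ratio (fun k => aT_pos hμ hx (k+1)) (show 4*x < 1 by linarith)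
  have T : Tendsto (fun k : ℕ => ((2*(k:ℝ)+(μ+2))/((k:ℝ)+(μ+2))) *
      ((2*(k:ℝ)+(μ+3))/((k:ℝ)+2)) * x) atTop (𝓝 (2*2*x)) :=
    ((tendsto_lin 2 (μ+2) (μ+2)).mul (tendsto_lin 2 (μ+3) 2)).mul_const x
  have : (2:ℝ)*2*x = 4*x := by ring
  rw [this] at T
  apply T.congr
  intro k
  have h1 : (0:ℝ) < μ + 1 + ((k:ℝ)+1) := by positivity
  have h2 : (0:ℝ) < ((k:ℝ)+1) + 1 := by positivity
  have hA : (0:ℝ) < (k:ℝ)+(μ+2) := by positivity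
  have hB : (0:ℝ) < (k:ℝ)+2 := by positivity
  rw [aT_succ hμ x (k+1), mul_div_assoc, mul_comm (lambdaTerm μ x (k+1)),
    mul_div_assoc, div_self (aT_pos hμ hx (k+1)).ne', mul_one]
  push_cast
  rw [eq_comm, div_eq_iff (by positivity)]
  field_simp
  ring

lemma summable_bT {μ x : ℝ} (hμ : 0 < μ) (hx : 0 < x) (hx4 : x < 1/4) :
    Summable (bTerm μ x) := by
  apply summable_pos_ratio (fun k => bT_pos hμ hx (k+1)) (show 4*x < 1 by linarith)
  have T : Tendsto (fun k : ℕ => ((2*(k:ℝ)+(μ+3))/((k:ℝ)+(μ+2))) *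
      ((2*(k:ℝ)+(μ+4))/((k:ℝ)+2)) * x) atTop (𝓝 (2*2*x)) :=
    ((tendsto_lin 2 (μ+3) (μ+2)).mul (tendsto_lin 2 (μ+4) 2)).mul_const x
  have : (2:ℝ)*2*x = 4*x := by ring
  rw [this] at T
  apply T.congr
  intro k
  have hA : (0:ℝ) < (k:ℝ)+(μ+2) := by positivity
  have hB : (0:ℝ) < (k:ℝ)+2 := by positivity
  rw [bT_succ hμ x (k+1), mul_div_assoc, mul_comm (bTerm μ x (k+1)),
    mul_div_assoc, div_self (bT_pos hμ hx (k+1)).ne', mul_one]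
  push_cast
  rw [eq_comm, div_eq_iff (by positivity)]
  field_simp
  ring

lemma aT_eq (μ x : ℝ) (k : ℕ) : lambdaTerm μ x k = lambdaTerm μ 1 k * x^k := by
  unfold lambdaTerm; rw [one_pow]; ring

lemma bT_eq (μ x : ℝ) (k : ℕ) : bTerm μ x k = bTerm μ 1 k * x^k := by
  unfold bTerm; rw [one_pow]; ring

lemma summable_aD {μ r : ℝ} (hμ : 0 < μ) (hr : 0 < r) (hr4 : r < 1/4) :
    Summable (fun k : ℕ => lambdaTerm μ 1 k * ((k:ℝ) * r^(k-1))) := by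
  have hpos : ∀ k : ℕ, 0 < lambdaTerm μ 1 (k+1) * (((k+1:ℕ)):ℝ) * r^k := by
    intro k
    have := aT_pos hμ (one_pos) (k+1) (μ := μ)
    positivity
  apply summable_pos_ratio (f := fun k => lambdaTerm μ 1 k * ((k:ℝ) * r^(k-1)))
    (fun k => by simpa [mul_assoc] using hpos k) (show 4*r < 1 by linarith)
  have T : Tendsto (fun k : ℕ => (2*(k:ℝ)+(μ+2))/((k:ℝ)+(μ+2)) *
      ((2*(k:ℝ)+(μ+3))/((k:ℝ)+2)) * ((1*(k:ℝ)+2)/((k:ℝ)+1)) * r) atTop (𝓝 (2*2*1*r)) :=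
    (((tendsto_lin 2 (μ+2) (μ+2)).mul (tendsto_lin 2 (μ+3) 2)).mul
      (tendsto_lin 1 2 1)).mul_const r
  have : (2:ℝ)*2*1*r = 4*r := by ring
  rw [this] at T
  apply T.congr
  intro k
  have e1 : (k+1+1) - 1 = k+1 := rfl
  have e2 : (k+1) - 1 = k := rfl
  rw [e1, e2, aT_succ hμ 1 (k+1)]
  have h1 : (0:ℝ) < μ + 1 + ((k:ℝ)+1) := by positivity
  have hL : lambdaTerm μ 1 (k+1) > 0 := aT_pos hμ one_pos (k+1)
  push_cast
  rw [eq_comm, div_eq_iff (by positivity)]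
  field_simp
  ring

lemma summable_bD {μ r : ℝ} (hμ : 0 < μ) (hr : 0 < r) (hr4 : r < 1/4) :
    Summable (fun k : ℕ => bTerm μ 1 k * ((k:ℝ) * r^(k-1))) := by
  have hpos : ∀ k : ℕ, 0 < bTerm μ 1 (k+1) * (((k+1:ℕ)):ℝ) * r^k := by
    intro k
    have := bT_pos hμ (one_pos) (k+1) (μ := μ)
    positivity
  apply summable_pos_ratio (f := fun k => bTerm μ 1 k * ((k:ℝ) * r^(k-1)))
    (fun k => by simpa [mul_assoc] using hpos k) (show 4*r < 1 by linarith)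
  have T : Tendsto (fun k : ℕ => (2*(k:ℝ)+(μ+3))/((k:ℝ)+(μ+2)) *
      ((2*(k:ℝ)+(μ+4))/((k:ℝ)+2)) * ((1*(k:ℝ)+2)/((k:ℝ)+1)) * r) atTop (𝓝 (2*2*1*r)) :=
    (((tendsto_lin 2 (μ+3) (μ+2)).mul (tendsto_lin 2 (μ+4) 2)).mul
      (tendsto_lin 1 2 1)).mul_const r
  have : (2:ℝ)*2*1*r = 4*r := by ring
  rw [this] at T
  apply T.congr
  intro k
  have e1 : (k+1+1) - 1 = k+1 := rfl
  have e2 : (k+1) - 1 = k := rfl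
  rw [e1, e2, bT_succ hμ 1 (k+1)]
  have h1 : (0:ℝ) < μ + 1 + ((k:ℝ)+1) := by positivity
  have hL : bTerm μ 1 (k+1) > 0 := bT_pos hμ one_pos (k+1)
  push_cast
  rw [eq_comm, div_eq_iff (by positivity)]
  field_simp
  ring

lemma hasDerivAt_term_a (μ : ℝ) (k : ℕ) (y : ℝ) :
    HasDerivAt (fun z => lambdaTerm μ z k) (lambdaTerm μ 1 k * ((k:ℝ) * y^(k-1))) y := by
  have : (fun z => lambdaTerm μ z k) = fun z => lambdaTerm μ 1 k * z^k := by
    funext z; exact aT_eq μ z k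
  rw [this]
  simpa using (hasDerivAt_pow k y).const_mul (lambdaTerm μ 1 k)

lemma hasDerivAt_term_b (μ : ℝ) (k : ℕ) (y : ℝ) :
    HasDerivAt (fun z => bTerm μ z k) (bTerm μ 1 k * ((k:ℝ) * y^(k-1))) y := by
  have : (fun z => bTerm μ z k) = fun z => bTerm μ 1 k * z^k := by
    funext z; exact bT_eq μ z k
  rw [this]
  simpa using (hasDerivAt_pow k y).const_mul (bTerm μ 1 k)

lemma hasDerivAt_A {μ z : ℝ} (hμ : 0 < μ) (hz : 0 < z) (hz4 : z < 1/4) :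
    HasDerivAt (fun y => ∑' k, lambdaTerm μ y k)
      (∑' k, lambdaTerm μ 1 k * ((k:ℝ) * z^(k-1))) z := by
  set r : ℝ := (z + 1/4)/2 with hr
  have hzr : z < r := by rw [hr]; linarith
  have hr0 : 0 < r := by rw [hr]; linarith
  have hr4 : r < 1/4 := by rw [hr]; linarith
  apply hasDerivAt_tsum_of_isPreconnected (summable_aD hμ hr0 hr4) isOpen_Ioo
    (isPreconnected_Ioo (a := (0:ℝ)) (b := r)) (fun k y _ => hasDerivAt_term_a μ k y)
    ?_ (Set.mem_Ioo.2 ⟨hz, hzr⟩) ((summable_aT hμ hz hz4)) (Set.mem_Ioo.2 ⟨hz, hzr⟩)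
  intro k y hy
  obtain ⟨hy0, hyr⟩ := Set.mem_Ioo.1 hy
  have h1 : 0 < lambdaTerm μ 1 k := aT_pos hμ one_pos k
  rw [Real.norm_eq_abs, abs_of_nonneg (by positivity)]
  have h2 : y^(k-1) ≤ r^(k-1) := pow_le_pow_left₀ hy0.le (by linarith) _
  have h3 : (0:ℝ) ≤ (k:ℝ) := Nat.cast_nonneg k
  exact mul_le_mul_of_nonneg_left (mul_le_mul_of_nonneg_left h2 h3) h1.le

lemma hasDerivAt_B {μ z : ℝ} (hμ : 0 < μ) (hz : 0 < z) (hz4 : z < 1/4) :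
    HasDerivAt (fun y => ∑' k, bTerm μ y k)
      (∑' k, bTerm μ 1 k * ((k:ℝ) * z^(k-1))) z := by
  set r : ℝ := (z + 1/4)/2 with hr
  have hzr : z < r := by rw [hr]; linarith
  have hr0 : 0 < r := by rw [hr]; linarith
  have hr4 : r < 1/4 := by rw [hr]; linarith
  apply hasDerivAt_tsum_of_isPreconnected (summable_bD hμ hr0 hr4) isOpen_Ioo
    (isPreconnected_Ioo (a := (0:ℝ)) (b := r)) (fun k y _ => hasDerivAt_term_b μ k y)
    ?_ (Set.mem_Ioo.2 ⟨hz, hzr⟩) ((summable_bT hμ hz hz4)) (Set.mem_Ioo.2 ⟨hz, hzr⟩)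
  intro k y hy
  obtain ⟨hy0, hyr⟩ := Set.mem_Ioo.1 hy
  have h1 : 0 < bTerm μ 1 k := bT_pos hμ one_pos k
  rw [Real.norm_eq_abs, abs_of_nonneg (by positivity)]
  have h2 : y^(k-1) ≤ r^(k-1) := pow_le_pow_left₀ hy0.le (by linarith) _
  have h3 : (0:ℝ) ≤ (k:ℝ) := Nat.cast_nonneg k
  exact mul_le_mul_of_nonneg_left (mul_le_mul_of_nonneg_left h2 h3) h1.le

lemma termZ (c z : ℝ) : ∀ k : ℕ, z * (c * ((k:ℝ) * z^(k-1))) = (k:ℝ) * (c * z^k)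
  | 0 => by simp
  | (k+1) => by
    have h : (k+1) - 1 = k := rfl
    rw [h]; push_cast; ring

lemma summable_kaT {μ z : ℝ} (hμ : 0 < μ) (hz : 0 < z) (hz4 : z < 1/4) :
    Summable (fun k : ℕ => (k:ℝ) * lambdaTerm μ z k) := by
  apply ((summable_aD hμ hz hz4).mul_left z).congr
  intro k
  rw [termZ (lambdaTerm μ 1 k) z k, ← aT_eq]

lemma summable_kbT {μ z : ℝ} (hμ : 0 < μ) (hz : 0 < z) (hz4 : z < 1/4) :
    Summable (fun k : ℕ => (k:ℝ) * bTerm μ z k) := by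
  apply ((summable_bD hμ hz hz4).mul_left z).congr
  intro k
  rw [termZ (bTerm μ 1 k) z k, ← bT_eq]

lemma sum_kaT {μ z : ℝ} (hμ : 0 < μ) (hz : 0 < z) (hz4 : z < 1/4) :
    (∑' k : ℕ, (k:ℝ) * lambdaTerm μ z k) = z * ∑' k, lambdaTerm μ 1 k * ((k:ℝ)*z^(k-1)) := by
  rw [← tsum_mul_left]
  apply tsum_congr
  intro k
  rw [termZ (lambdaTerm μ 1 k) z k, ← aT_eq]

lemma sum_kbT {μ z : ℝ} (hμ : 0 < μ) (hz : 0 < z) (hz4 : z < 1/4) :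
    (∑' k : ℕ, (k:ℝ) * bTerm μ z k) = z * ∑' k, bTerm μ 1 k * ((k:ℝ)*z^(k-1)) := by
  rw [← tsum_mul_left]
  apply tsum_congr
  intro k
  rw [termZ (bTerm μ 1 k) z k, ← bT_eq]

lemma eq1 {μ z : ℝ} (hμ : 0 < μ) (hz : 0 < z) (hz4 : z < 1/4) :
    μ * (∑' k, lambdaTerm μ z k) + 2*z*(∑' k, lambdaTerm μ 1 k * ((k:ℝ)*z^(k-1)))
      = μ * (∑' k, bTerm μ z k) := by
  have HA : HasSum (lambdaTerm μ z) (∑' k, lambdaTerm μ z k) := (summable_aT hμ hz hz4).hasSum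
  have HkA : HasSum (fun k : ℕ => (k:ℝ) * lambdaTerm μ z k)
      (∑' k : ℕ, (k:ℝ) * lambdaTerm μ z k) := (summable_kaT hμ hz hz4).hasSum
  have HB : HasSum (bTerm μ z) (∑' k, bTerm μ z k) := (summable_bT hμ hz hz4).hasSum
  have Hcomb : HasSum (fun k : ℕ => μ * lambdaTerm μ z k + 2 * ((k:ℝ) * lambdaTerm μ z k))
      (μ * (∑' k, lambdaTerm μ z k) + 2 * (∑' k : ℕ, (k:ℝ) * lambdaTerm μ z k)) :=
    (HA.mul_left μ).add (HkA.mul_left 2)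
  have hfe : (fun k : ℕ => μ * lambdaTerm μ z k + 2 * ((k:ℝ) * lambdaTerm μ z k))
      = (fun k : ℕ => μ * bTerm μ z k) := by
    funext k
    rw [← id1 hμ z k]; push_cast; ring
  rw [hfe] at Hcomb
  have := Hcomb.unique (HB.mul_left μ)
  rw [sum_kaT hμ hz hz4] at this
  linarith [this]

lemma eq2 {μ z : ℝ} (hμ : 0 < μ) (hz : 0 < z) (hz4 : z < 1/4) :
    2*z*(1-4*z)*(∑' k, bTerm μ 1 k * ((k:ℝ)*z^(k-1)))
      = μ * (∑' k, lambdaTerm μ z k) - μ * (∑' k, bTerm μ z k)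
        + 4*(μ+1)*z*(∑' k, bTerm μ z k) := by
  set S : ℝ := ∑' k : ℕ, (k:ℝ) * bTerm μ z k with hSdef
  have HA : HasSum (lambdaTerm μ z) (∑' k, lambdaTerm μ z k) := (summable_aT hμ hz hz4).hasSum
  have HB : HasSum (bTerm μ z) (∑' k, bTerm μ z k) := (summable_bT hμ hz hz4).hasSum
  have HkB : HasSum (fun k : ℕ => (k:ℝ) * bTerm μ z k) S := (summable_kbT hμ hz hz4).hasSum
  -- the telescoped sequence
  set d : ℕ → ℝ := fun k => match k with
    | 0 => 0
    | (k+1) => 4*(μ+2*k+1)*z*bTerm μ z k with hd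
  have hc : ∀ k : ℕ, (μ + 2*k)*bTerm μ z k - μ*lambdaTerm μ z k - 4*(μ+2*k+1)*z*bTerm μ z k
      = d k - d (k+1) := by
    intro k
    match k with
    | 0 =>
      show _ = 0 - 4*(μ+2*(0:ℕ)+1)*z*bTerm μ z 0
      rw [bT_zero, aT_zero]
      push_cast; ring
    | (k+1) =>
      have e1 : d (k+1) = 4*(μ+2*(k:ℕ)+1)*z*bTerm μ z k := rfl
      have e2 : d (k+1+1) = 4*(μ+2*((k+1:ℕ):ℝ)+1)*z*bTerm μ z (k+1) := rfl
      rw [e1, e2]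
      have h2 := id2 hμ z k
      push_cast at h2 ⊢
      linarith [h2]
  have Hcomb : HasSum (fun k : ℕ => (μ + 2*k)*bTerm μ z k - μ*lambdaTerm μ z k
        - 4*(μ+2*k+1)*z*bTerm μ z k)
      ((μ * (∑' k, bTerm μ z k) + 2 * S) - μ * (∑' k, lambdaTerm μ z k)
        - ((4*μ*z + 4*z) * (∑' k, bTerm μ z k) + 8*z*S)) := by
    have H := (((HB.mul_left μ).add (HkB.mul_left 2)).sub (HA.mul_left μ)).sub
      ((HB.mul_left (4*μ*z + 4*z)).add (HkB.mul_left (8*z)))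
    convert H using 2 with k
    case e'_3 => rfl
    push_cast; ring
  have Htel : HasSum (fun k : ℕ => (μ + 2*k)*bTerm μ z k - μ*lambdaTerm μ z k
        - 4*(μ+2*k+1)*z*bTerm μ z k) 0 := by
    rw [Hcomb.summable.hasSum_iff_tendsto_nat]
    have hps : ∀ n : ℕ, (∑ i ∈ Finset.range n, ((μ + 2*i)*bTerm μ z i - μ*lambdaTerm μ z i
        - 4*(μ+2*i+1)*z*bTerm μ z i)) = d 0 - d n := by
      intro n
      rw [← Finset.sum_range_sub' d n]
      exact Finset.sum_congr rfl fun i _ => hc i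
    simp only [hps]
    have hd0 : d 0 = 0 := rfl
    rw [hd0]
    have htail : Tendsto (fun n : ℕ => d (n+1)) atTop (𝓝 0) := by
      have h1 : Tendsto (fun k : ℕ => (4*μ*z+4*z) * bTerm μ z k + 8*z*((k:ℝ) * bTerm μ z k))
          atTop (𝓝 ((4*μ*z+4*z) * 0 + 8*z*0)) :=
        (((summable_bT hμ hz hz4).tendsto_atTop_zero).const_mul _).add
          (((summable_kbT hμ hz hz4).tendsto_atTop_zero).const_mul _)
      simp only [mul_zero, add_zero] at h1
      apply h1.congr
      intro k
      show (4*μ*z+4*z) * bTerm μ z k + 8*z*((k:ℝ) * bTerm μ z k) = 4*(μ+2*k+1)*z*bTerm μ z k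
      ring
    have hdt : Tendsto d atTop (𝓝 0) := (tendsto_add_atTop_iff_nat 1).mp htail
    have h9 : Tendsto (fun n : ℕ => (0:ℝ) - d n) atTop (𝓝 (0 - 0)) :=
      tendsto_const_nhds.sub hdt
    simpa using h9
  have h0 := Hcomb.unique Htel
  have hS2 : S = z * ∑' k, bTerm μ 1 k * ((k:ℝ)*z^(k-1)) := by
    rw [hSdef]; exact sum_kbT hμ hz hz4
  rw [hS2] at h0
  linarith [h0]

lemma tendsto_A0 {μ : ℝ} (hμ : 0 < μ) :
    Tendsto (fun z => ∑' k, lambdaTerm μ z k) (nhdsWithin 0 (Set.Ioi 0)) (𝓝 1) := by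
  set C : ℝ := 8 * ∑' k : ℕ, lambdaTerm μ (1/8) (k+1) with hC
  have h8 : (0:ℝ) < 1/8 := by norm_num
  have hsum8 : Summable (fun k : ℕ => lambdaTerm μ (1/8) (k+1)) :=
    (summable_nat_add_iff 1).2 (summable_aT hμ h8 (by norm_num))
  have key : ∀ z ∈ Set.Ioc (0:ℝ) (1/8),
      1 ≤ (∑' k, lambdaTerm μ z k) ∧ (∑' k, lambdaTerm μ z k) ≤ 1 + C * z := by
    intro z hz
    obtain ⟨hz0, hz8⟩ := hz
    have hz4 : z < 1/4 := by linarith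
    have hsz : Summable (lambdaTerm μ z) := summable_aT hμ hz0 hz4
    have hszt : Summable (fun k : ℕ => lambdaTerm μ z (k+1)) := (summable_nat_add_iff 1).2 hsz
    have hsplit : (∑' k, lambdaTerm μ z k) = 1 + ∑' k : ℕ, lambdaTerm μ z (k+1) := by
      rw [Summable.tsum_eq_zero_add hsz, aT_zero]
    constructor
    · rw [hsplit]
      have : 0 ≤ ∑' k : ℕ, lambdaTerm μ z (k+1) :=
        tsum_nonneg fun k => (aT_pos hμ hz0 (k+1)).le
      linarith
    · rw [hsplit]
      have hle : ∀ k : ℕ, lambdaTerm μ z (k+1) ≤ (8 * lambdaTerm μ (1/8) (k+1)) * z := by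
        intro k
        rw [aT_eq μ z (k+1), aT_eq μ (1/8) (k+1)]
        have hc : 0 < lambdaTerm μ 1 (k+1) := aT_pos hμ one_pos (k+1)
        have hpow : z^(k+1) ≤ (1/8)^k * z := by
          calc z^(k+1) = z^k * z := by ring
          _ ≤ (1/8)^k * z := by
            apply mul_le_mul_of_nonneg_right _ hz0.le
            exact pow_le_pow_left₀ hz0.le hz8 k
        calc lambdaTerm μ 1 (k+1) * z^(k+1) ≤ lambdaTerm μ 1 (k+1) * ((1/8)^k * z) :=
              mul_le_mul_of_nonneg_left hpow hc.le
        _ = (8 * (lambdaTerm μ 1 (k+1) * (1/8)^(k+1))) * z := by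
            rw [pow_succ]; ring
      have := Summable.tsum_le_tsum hle hszt (((summable_nat_add_iff 1).2
        (summable_aT hμ h8 (by norm_num))).mul_left 8 |>.mul_right z)
      rw [tsum_mul_right, tsum_mul_left] at this
      rw [hC]
      linarith
  have hmem : Set.Ioc (0:ℝ) (1/8) ∈ nhdsWithin (0:ℝ) (Set.Ioi 0) :=
    Ioc_mem_nhdsGT_of_mem (by constructor <;> norm_num)
  have hub : Tendsto (fun z : ℝ => 1 + C * z) (nhdsWithin 0 (Set.Ioi 0)) (𝓝 1) := by
    have : Tendsto (fun z : ℝ => 1 + C * z) (𝓝 0) (𝓝 (1 + C * 0)) :=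
      (tendsto_const_nhds.add (tendsto_const_nhds.mul tendsto_id))
    rw [mul_zero, add_zero] at this
    exact this.mono_left nhdsWithin_le_nhds
  apply tendsto_of_tendsto_of_tendsto_of_le_of_le' tendsto_const_nhds hub
  · filter_upwards [hmem] with z hz
    exact (key z hz).1
  · filter_upwards [hmem] with z hz
    exact (key z hz).2

lemma tendsto_B0 {μ : ℝ} (hμ : 0 < μ) :
    Tendsto (fun z => ∑' k, bTerm μ z k) (nhdsWithin 0 (Set.Ioi 0)) (𝓝 1) := by
  set C : ℝ := 8 * ∑' k : ℕ, bTerm μ (1/8) (k+1) with hC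
  have h8 : (0:ℝ) < 1/8 := by norm_num
  have hsum8 : Summable (fun k : ℕ => bTerm μ (1/8) (k+1)) :=
    (summable_nat_add_iff 1).2 (summable_bT hμ h8 (by norm_num))
  have key : ∀ z ∈ Set.Ioc (0:ℝ) (1/8),
      1 ≤ (∑' k, bTerm μ z k) ∧ (∑' k, bTerm μ z k) ≤ 1 + C * z := by
    intro z hz
    obtain ⟨hz0, hz8⟩ := hz
    have hz4 : z < 1/4 := by linarith
    have hsz : Summable (bTerm μ z) := summable_bT hμ hz0 hz4
    have hszt : Summable (fun k : ℕ => bTerm μ z (k+1)) := (summable_nat_add_iff 1).2 hsz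
    have hsplit : (∑' k, bTerm μ z k) = 1 + ∑' k : ℕ, bTerm μ z (k+1) := by
      rw [Summable.tsum_eq_zero_add hsz, bT_zero]
    constructor
    · rw [hsplit]
      have : 0 ≤ ∑' k : ℕ, bTerm μ z (k+1) :=
        tsum_nonneg fun k => (bT_pos hμ hz0 (k+1)).le
      linarith
    · rw [hsplit]
      have hle : ∀ k : ℕ, bTerm μ z (k+1) ≤ (8 * bTerm μ (1/8) (k+1)) * z := by
        intro k
        rw [bT_eq μ z (k+1), bT_eq μ (1/8) (k+1)]
        have hc : 0 < bTerm μ 1 (k+1) := bT_pos hμ one_pos (k+1)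
        have hpow : z^(k+1) ≤ (1/8)^k * z := by
          calc z^(k+1) = z^k * z := by ring
          _ ≤ (1/8)^k * z := by
            apply mul_le_mul_of_nonneg_right _ hz0.le
            exact pow_le_pow_left₀ hz0.le hz8 k
        calc bTerm μ 1 (k+1) * z^(k+1) ≤ bTerm μ 1 (k+1) * ((1/8)^k * z) :=
              mul_le_mul_of_nonneg_left hpow hc.le
        _ = (8 * (bTerm μ 1 (k+1) * (1/8)^(k+1))) * z := by
            rw [pow_succ]; ring
      have := Summable.tsum_le_tsum hle hszt (((summable_nat_add_iff 1).2
        (summable_bT hμ h8 (by norm_num))).mul_left 8 |>.mul_right z)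
      rw [tsum_mul_right, tsum_mul_left] at this
      rw [hC]
      linarith
  have hmem : Set.Ioc (0:ℝ) (1/8) ∈ nhdsWithin (0:ℝ) (Set.Ioi 0) :=
    Ioc_mem_nhdsGT_of_mem (by constructor <;> norm_num)
  have hub : Tendsto (fun z : ℝ => 1 + C * z) (nhdsWithin 0 (Set.Ioi 0)) (𝓝 1) := by
    have : Tendsto (fun z : ℝ => 1 + C * z) (𝓝 0) (𝓝 (1 + C * 0)) :=
      (tendsto_const_nhds.add (tendsto_const_nhds.mul tendsto_id))
    rw [mul_zero, add_zero] at this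
    exact this.mono_left nhdsWithin_le_nhds
  apply tendsto_of_tendsto_of_tendsto_of_le_of_le' tendsto_const_nhds hub
  · filter_upwards [hmem] with z hz
    exact (key z hz).1
  · filter_upwards [hmem] with z hz
    exact (key z hz).2

lemma hasDerivAt_Phi {μ z : ℝ} (hμ : 0 < μ) (hz : 0 < z) (hz4 : z < 1/4) :
    HasDerivAt (fun y => ((∑' k, lambdaTerm μ y k) - Real.sqrt (1-4*y) * (∑' k, bTerm μ y k))
      * ((1 - Real.sqrt (1-4*y))/2) ^ μ) 0 z := by
  have h14 : (0:ℝ) < 1-4*z := by linarith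
  set s : ℝ := Real.sqrt (1-4*z) with hsdef
  have hs0 : 0 < s := Real.sqrt_pos.2 h14
  have hs2 : s^2 = 1-4*z := Real.sq_sqrt h14.le
  have hs1 : s < 1 := by nlinarith
  have hτ0 : (0:ℝ) < (1-s)/2 := by linarith
  set a : ℝ := ∑' k, lambdaTerm μ z k with hadef
  set b : ℝ := ∑' k, bTerm μ z k with hbdef
  set dA : ℝ := ∑' k, lambdaTerm μ 1 k * ((k:ℝ)*z^(k-1)) with hdAdef
  set dB : ℝ := ∑' k, bTerm μ 1 k * ((k:ℝ)*z^(k-1)) with hdBdef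
  have hlin : HasDerivAt (fun y : ℝ => 1-4*y) (-4) z := by
    simpa using ((hasDerivAt_id z).const_mul (4:ℝ)).const_sub 1
  have hds : HasDerivAt (fun y => Real.sqrt (1-4*y)) (-4/(2*s)) z :=
    hlin.sqrt h14.ne'
  have hdF : HasDerivAt (fun y => ∑' k, lambdaTerm μ y k) dA z := hasDerivAt_A hμ hz hz4
  have hdG : HasDerivAt (fun y => ∑' k, bTerm μ y k) dB z := hasDerivAt_B hμ hz hz4
  have hτ : HasDerivAt (fun y => (1 - Real.sqrt (1-4*y))/2) (-(-4/(2*s))/2) z :=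
    (hds.const_sub 1).div_const 2
  have hτp : HasDerivAt (fun y => ((1 - Real.sqrt (1-4*y))/2) ^ μ)
      (-(-4/(2*s))/2 * μ * ((1-s)/2)^(μ-1)) z := by
    have h := hτ.rpow_const (p := μ) (Or.inl hτ0.ne')
    rw [← hsdef] at h
    exact h
  have hprod := ((hdF.sub (hds.mul hdG)).mul hτp)
  simp only [Pi.sub_apply, Pi.mul_apply] at hprod
  rw [← hsdef, ← hadef, ← hbdef] at hprod
  convert hprod using 2
  case e'_4 => rfl
  case e'_5 => rfl
  case e'_8 => rfl
  have hA1 := eq1 hμ hz hz4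
  have hA2 := eq2 hμ hz hz4
  rw [← hadef, ← hbdef, ← hdAdef] at hA1
  rw [← hadef, ← hbdef, ← hdBdef] at hA2
  have hdAval : dA = (μ*b - μ*a)/(2*z) := by
    rw [eq_div_iff (by positivity)]; linarith
  have hdBval : dB = (μ*a - μ*b + 4*(μ+1)*z*b)/(2*z*s^2) := by
    rw [eq_div_iff (by positivity), hs2]; linarith
  have hsplit : ((1-s)/2)^μ = ((1-s)/2)^(μ-1) * ((1-s)/2) := by
    rw [← Real.rpow_add_one hτ0.ne' (μ-1)]
    norm_num
  set E : ℝ := ((1-s)/2)^(μ-1) with hEdef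
  have hzval : z = (1 - s^2)/4 := by rw [hs2]; ring
  rw [hdAval, hdBval, hsplit]
  rw [hzval]
  have h1s : 1 - s^2 ≠ 0 := by rw [hzval] at hz; nlinarith
  field_simp
  ring

lemma hasDerivAt_Psi {μ z : ℝ} (hμ : 0 < μ) (hz : 0 < z) (hz4 : z < 1/4) :
    HasDerivAt (fun y => ((∑' k, lambdaTerm μ y k) + Real.sqrt (1-4*y) * (∑' k, bTerm μ y k))
      * ((1 + Real.sqrt (1-4*y))/2) ^ μ) 0 z := by
  have h14 : (0:ℝ) < 1-4*z := by linarith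
  set s : ℝ := Real.sqrt (1-4*z) with hsdef
  have hs0 : 0 < s := Real.sqrt_pos.2 h14
  have hs2 : s^2 = 1-4*z := Real.sq_sqrt h14.le
  have hs1 : s < 1 := by nlinarith
  have hτ0 : (0:ℝ) < (1+s)/2 := by linarith
  set a : ℝ := ∑' k, lambdaTerm μ z k with hadef
  set b : ℝ := ∑' k, bTerm μ z k with hbdef
  set dA : ℝ := ∑' k, lambdaTerm μ 1 k * ((k:ℝ)*z^(k-1)) with hdAdef
  set dB : ℝ := ∑' k, bTerm μ 1 k * ((k:ℝ)*z^(k-1)) with hdBdef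
  have hlin : HasDerivAt (fun y : ℝ => 1-4*y) (-4) z := by
    simpa using ((hasDerivAt_id z).const_mul (4:ℝ)).const_sub 1
  have hds : HasDerivAt (fun y => Real.sqrt (1-4*y)) (-4/(2*s)) z :=
    hlin.sqrt h14.ne'
  have hdF : HasDerivAt (fun y => ∑' k, lambdaTerm μ y k) dA z := hasDerivAt_A hμ hz hz4
  have hdG : HasDerivAt (fun y => ∑' k, bTerm μ y k) dB z := hasDerivAt_B hμ hz hz4
  have hτ : HasDerivAt (fun y => (1 + Real.sqrt (1-4*y))/2) (-4/(2*s)/2) z :=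
    ((hds.const_add 1).div_const 2)
  have hτp : HasDerivAt (fun y => ((1 + Real.sqrt (1-4*y))/2) ^ μ)
      (-4/(2*s)/2 * μ * ((1+s)/2)^(μ-1)) z := by
    have h := hτ.rpow_const (p := μ) (Or.inl hτ0.ne')
    rw [← hsdef] at h
    exact h
  have hprod := ((hdF.add (hds.mul hdG)).mul hτp)
  simp only [Pi.add_apply, Pi.mul_apply] at hprod
  rw [← hsdef, ← hadef, ← hbdef] at hprod
  convert hprod using 2
  case e'_4 => rfl
  case e'_5 => rfl
  case e'_8 => rfl
  have hA1 := eq1 hμ hz hz4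
  have hA2 := eq2 hμ hz hz4
  rw [← hadef, ← hbdef, ← hdAdef] at hA1
  rw [← hadef, ← hbdef, ← hdBdef] at hA2
  have hdAval : dA = (μ*b - μ*a)/(2*z) := by
    rw [eq_div_iff (by positivity)]; linarith
  have hdBval : dB = (μ*a - μ*b + 4*(μ+1)*z*b)/(2*z*s^2) := by
    rw [eq_div_iff (by positivity), hs2]; linarith
  have hsplit : ((1+s)/2)^μ = ((1+s)/2)^(μ-1) * ((1+s)/2) := by
    rw [← Real.rpow_add_one hτ0.ne' (μ-1)]
    norm_num
  set E : ℝ := ((1+s)/2)^(μ-1) with hEdef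
  have hzval : z = (1 - s^2)/4 := by rw [hs2]; ring
  rw [hdAval, hdBval, hsplit]
  rw [hzval]
  have h1s : 1 - s^2 ≠ 0 := by rw [hzval] at hz; nlinarith
  field_simp
  ring

lemma const_on_Ioo {f : ℝ → ℝ} (hf : ∀ z : ℝ, 0 < z → z < 1/4 → HasDerivAt f 0 z)
    {z₁ z₂ : ℝ} (h1 : 0 < z₁) (h12 : z₁ ≤ z₂) (h24 : z₂ < 1/4) : f z₂ = f z₁ := by
  have hcont : ContinuousOn f (Set.Icc z₁ z₂) := by
    intro y hy
    exact (hf y (lt_of_lt_of_le h1 hy.1) (lt_of_le_of_lt hy.2 h24)).continuousAt.continuousWithinAt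
  have hderiv : ∀ y ∈ Set.Ico z₁ z₂, HasDerivWithinAt f 0 (Set.Ici y) y := fun y hy =>
    (hf y (lt_of_lt_of_le h1 hy.1) (lt_trans hy.2 h24)).hasDerivWithinAt
  exact constant_of_has_deriv_right_zero hcont hderiv z₂ (Set.mem_Icc.2 ⟨h12, le_refl _⟩)

lemma main_hasSum {μ x : ℝ} (hμ : 0 < μ) (hx : 0 < x) (hx4 : x < 1/4) :
    HasSum (lambdaTerm μ x) (((1 - Real.sqrt (1 - 4 * x)) / (2 * x)) ^ μ) := by
  have h14 : (0:ℝ) < 1-4*x := by linarith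
  have hs0 : 0 < Real.sqrt (1-4*x) := Real.sqrt_pos.2 h14
  have hs2 : Real.sqrt (1-4*x)^2 = 1-4*x := Real.sq_sqrt h14.le
  have hs1 : Real.sqrt (1-4*x) < 1 := by nlinarith
  -- limits of the two combinations at 0⁺
  have hsq0 : Tendsto (fun z : ℝ => Real.sqrt (1-4*z)) (nhdsWithin 0 (Set.Ioi 0)) (𝓝 1) := by
    have hc : Continuous fun z : ℝ => Real.sqrt (1-4*z) :=
      Real.continuous_sqrt.comp (by continuity)
    have := hc.tendsto 0
    simp only [mul_zero, sub_zero, Real.sqrt_one] at this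
    exact this.mono_left nhdsWithin_le_nhds
  have hPhi0 : Tendsto (fun y => ((∑' k, lambdaTerm μ y k)
        - Real.sqrt (1-4*y) * (∑' k, bTerm μ y k)) * ((1 - Real.sqrt (1-4*y))/2) ^ μ)
      (nhdsWithin 0 (Set.Ioi 0)) (𝓝 0) := by
    have T1 : Tendsto (fun y => (∑' k, lambdaTerm μ y k)
        - Real.sqrt (1-4*y) * (∑' k, bTerm μ y k)) (nhdsWithin 0 (Set.Ioi 0)) (𝓝 0) := by
      have := (tendsto_A0 hμ).sub (hsq0.mul (tendsto_B0 hμ))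
      simpa using this
    have Tin : Tendsto (fun y : ℝ => (1 - Real.sqrt (1-4*y))/2)
        (nhdsWithin 0 (Set.Ioi 0)) (𝓝 0) := by
      have h0 : Tendsto (fun y : ℝ => ((1:ℝ) - Real.sqrt (1-4*y))/2)
          (nhdsWithin 0 (Set.Ioi 0)) (𝓝 ((1-1)/2)) :=
        (tendsto_const_nhds.sub hsq0).div_const 2
      norm_num at h0
      exact h0
    have T2 : Tendsto (fun y : ℝ => ((1 - Real.sqrt (1-4*y))/2) ^ μ)
        (nhdsWithin 0 (Set.Ioi 0)) (𝓝 0) := by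
      have hcont := (Real.continuousAt_rpow_const 0 μ (Or.inr hμ.le)).tendsto
      rw [Real.zero_rpow hμ.ne'] at hcont
      exact hcont.comp Tin
    simpa using T1.mul T2
  have hPsi2 : Tendsto (fun y => ((∑' k, lambdaTerm μ y k)
        + Real.sqrt (1-4*y) * (∑' k, bTerm μ y k)) * ((1 + Real.sqrt (1-4*y))/2) ^ μ)
      (nhdsWithin 0 (Set.Ioi 0)) (𝓝 2) := by
    have T1 : Tendsto (fun y => (∑' k, lambdaTerm μ y k)
        + Real.sqrt (1-4*y) * (∑' k, bTerm μ y k)) (nhdsWithin 0 (Set.Ioi 0)) (𝓝 2) := by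
      have := (tendsto_A0 hμ).add (hsq0.mul (tendsto_B0 hμ))
      norm_num at this
      exact this
    have Tin : Tendsto (fun y : ℝ => (1 + Real.sqrt (1-4*y))/2)
        (nhdsWithin 0 (Set.Ioi 0)) (𝓝 1) := by
      have h0 : Tendsto (fun y : ℝ => ((1:ℝ) + Real.sqrt (1-4*y))/2)
          (nhdsWithin 0 (Set.Ioi 0)) (𝓝 ((1+1)/2)) :=
        (tendsto_const_nhds.add hsq0).div_const 2
      norm_num at h0
      exact h0
    have T2 : Tendsto (fun y : ℝ => ((1 + Real.sqrt (1-4*y))/2) ^ μ)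
        (nhdsWithin 0 (Set.Ioi 0)) (𝓝 1) := by
      have hcont := (Real.continuousAt_rpow_const 1 μ (Or.inl one_ne_zero)).tendsto
      rw [Real.one_rpow] at hcont
      exact hcont.comp Tin
    have := T1.mul T2
    norm_num at this
    exact this
  -- constancy gives the values at x
  have hPhiX : ((∑' k, lambdaTerm μ x k) - Real.sqrt (1-4*x) * (∑' k, bTerm μ x k))
      * ((1 - Real.sqrt (1-4*x))/2) ^ μ = 0 := by
    apply tendsto_nhds_unique ?_ hPhi0
    have hmem : Set.Ioo (0:ℝ) x ∈ nhdsWithin (0:ℝ) (Set.Ioi 0) :=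
      Ioo_mem_nhdsGT_of_mem (Set.mem_Ico.2 ⟨le_refl 0, hx⟩)
    apply Tendsto.congr' ?_ (tendsto_const_nhds (α := ℝ))
    filter_upwards [hmem] with z hz
    exact const_on_Ioo (fun z hz1 hz2 => hasDerivAt_Phi hμ hz1 hz2) hz.1 hz.2.le hx4
  have hPsiX : ((∑' k, lambdaTerm μ x k) + Real.sqrt (1-4*x) * (∑' k, bTerm μ x k))
      * ((1 + Real.sqrt (1-4*x))/2) ^ μ = 2 := by
    apply tendsto_nhds_unique ?_ hPsi2
    have hmem : Set.Ioo (0:ℝ) x ∈ nhdsWithin (0:ℝ) (Set.Ioi 0) :=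
      Ioo_mem_nhdsGT_of_mem (Set.mem_Ico.2 ⟨le_refl 0, hx⟩)
    apply Tendsto.congr' ?_ (tendsto_const_nhds (α := ℝ))
    filter_upwards [hmem] with z hz
    exact const_on_Ioo (fun z hz1 hz2 => hasDerivAt_Psi hμ hz1 hz2) hz.1 hz.2.le hx4
  -- extract the value of the sum
  set s : ℝ := Real.sqrt (1-4*x)
  set a : ℝ := ∑' k, lambdaTerm μ x k
  set b : ℝ := ∑' k, bTerm μ x k
  have hτpos : (0:ℝ) < ((1-s)/2) ^ μ := Real.rpow_pos_of_pos (by linarith) μ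
  have hab : a = s * b := by
    rcases mul_eq_zero.1 hPhiX with h | h
    · linarith [h]
    · exact absurd h hτpos.ne'
  have hσpos : (0:ℝ) < ((1+s)/2) ^ μ := Real.rpow_pos_of_pos (by linarith) μ
  have haval : a = (((1+s)/2) ^ μ)⁻¹ := by
    rw [hab] at hPsiX ⊢
    have : (2 * (s*b)) * ((1+s)/2)^μ = 2 := by linarith [hPsiX]
    field_simp at this ⊢
    linarith
  have hyval : (1 - s) / (2*x) = ((1+s)/2)⁻¹ := by
    have h4 : (1-s)*(1+s) = 4*x := by nlinarith [hs2]
    rw [inv_div, div_eq_div_iff (by linarith) (by linarith)]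
    linarith [h4]
  have hval : ((1 - s) / (2*x)) ^ μ = a := by
    rw [hyval, Real.inv_rpow (by linarith), haval]
  rw [hval]
  exact (summable_aT hμ hx hx4).hasSum

theorem stmt_13 (x : ℝ) (hx0 : 0 < x) (hx1 : x < 1 / 4) :
    (∀ μ : ℝ, 0 < μ →
      HasSum (lambdaTerm μ x) (((1 - Real.sqrt (1 - 4 * x)) / (2 * x)) ^ μ)) ∧
    (∀ α β : ℝ, 0 < α → 0 < β →
      (∑' k : ℕ, lambdaTerm α x k) * (∑' k : ℕ, lambdaTerm β x k)
        = ∑' k : ℕ, lambdaTerm (α + β) x k) := by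
  constructor
  · exact fun μ hμ => main_hasSum hμ hx0 hx1
  · intro α β hα hβ
    have h14 : (0:ℝ) < 1-4*x := by linarith
    have hs2 : Real.sqrt (1-4*x)^2 = 1-4*x := Real.sq_sqrt h14.le
    have hs0 : 0 ≤ Real.sqrt (1-4*x) := Real.sqrt_nonneg _
    have hs1 : Real.sqrt (1-4*x) < 1 := by nlinarith
    have hy : (0:ℝ) < (1 - Real.sqrt (1 - 4 * x)) / (2 * x) := by
      apply div_pos (by linarith) (by linarith)
    rw [(main_hasSum hα hx0 hx1).tsum_eq, (main_hasSum hβ hx0 hx1).tsum_eq,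
      (main_hasSum (by linarith : (0:ℝ) < α + β) hx0 hx1).tsum_eq,
      ← Real.rpow_add hy]
end

section
/- Let m ≥ 2 be an integer, μ ≥ 0 and α, β > 0 real numbers, and k = ⌊m/2⌋. If m = 2k, then (μ+α)_{2k}(μ+β)_{2k} − (μ)_{2k}(μ+α+β)_{2k} > 0. If m = 2k+1, then (μ+α)_{2k}(μ+β)_{2k+2} + (μ+α)_{2k+2}(μ+β)_{2k} − (μ)_{2k}(μ+α+β)_{2k+2} − (μ)_{2k+2}(μ+α+β)_{2k} > 0. (This is the positivity of the last Gauss-paired Turánian term Ã_{⌊m/2⌋}, which together with the sign-change and negativity facts established earlier shows that the sequence A_0, …, A_{⌊m/2⌋} has exactly one change of sign.) -/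
lemma rf_zero (n : ℕ) : risingFactorial 0 (n + 1) = 0 := by
  induction n with
  | zero => simp [risingFactorial]
  | succ n ih => rw [risingFactorial, ih, zero_mul]

lemma L1 (μ α β : ℝ) (hμ : 0 ≤ μ) (hα : 0 < α) (hβ : 0 < β) (n : ℕ) (hn : 1 ≤ n) :
    risingFactorial μ n * risingFactorial (μ + α + β) n
      < risingFactorial (μ + α) n * risingFactorial (μ + β) n := by
  induction n with
  | zero => omega
  | succ n ih =>
      rcases Nat.eq_zero_or_pos n with h0 | h1
      · subst h0
        simp only [risingFactorial, Nat.cast_zero, one_mul, add_zero]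
        nlinarith
      · have ih' := ih h1
        have hC : 0 ≤ risingFactorial μ n := rf_nonneg hμ n
        have hD : 0 ≤ risingFactorial (μ + α + β) n := rf_nonneg (by linarith) n
        have hA : 0 < risingFactorial (μ + α) n := rf_pos (by linarith) n
        have hB : 0 < risingFactorial (μ + β) n := rf_pos (by linarith) n
        have hN : (0:ℝ) ≤ (n:ℝ) := Nat.cast_nonneg n
        simp only [risingFactorial]
        have hb : (0:ℝ) ≤ (μ + n) * (μ + α + β + n) := by positivity
        have hba : (μ + (n:ℝ)) * (μ + α + β + n) < (μ + α + n) * (μ + β + n) := by nlinarith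
        have hapos : (0:ℝ) < (μ + α + n) * (μ + β + n) := by positivity
        calc risingFactorial μ n * (μ + n) * (risingFactorial (μ + α + β) n * (μ + α + β + n))
            = (risingFactorial μ n * risingFactorial (μ + α + β) n)
                * ((μ + n) * (μ + α + β + n)) := by ring
          _ ≤ (risingFactorial μ n * risingFactorial (μ + α + β) n)
                * ((μ + α + n) * (μ + β + n)) := by
              apply mul_le_mul_of_nonneg_left (le_of_lt hba) (mul_nonneg hC hD)
          _ < (risingFactorial (μ + α) n * risingFactorial (μ + β) n)
                * ((μ + α + n) * (μ + β + n)) := by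
              exact mul_lt_mul_of_pos_right ih' hapos
          _ = risingFactorial (μ + α) n * (μ + α + n)
                * (risingFactorial (μ + β) n * (μ + β + n)) := by ring

lemma odd_case (n : ℕ) (μ α β : ℝ) (hμ : 0 ≤ μ) (hα : 0 < α) (hβ : 0 < β) (hn : 1 ≤ n) :
    0 < risingFactorial (μ + α) (n + 1) * risingFactorial (μ + β) (n + 3)
      + risingFactorial (μ + α) (n + 3) * risingFactorial (μ + β) (n + 1)
      - risingFactorial μ (n + 1) * risingFactorial (μ + α + β) (n + 3)
      - risingFactorial μ (n + 3) * risingFactorial (μ + α + β) (n + 1) := by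
  have hA : 0 < risingFactorial (μ + α) n := rf_pos (by linarith) n
  have hB : 0 < risingFactorial (μ + β) n := rf_pos (by linarith) n
  have hC : 0 ≤ risingFactorial μ n := rf_nonneg hμ n
  have hD : 0 ≤ risingFactorial (μ + α + β) n := rf_nonneg (by linarith) n
  have hCD : risingFactorial μ n * risingFactorial (μ + α + β) n
      ≤ risingFactorial (μ + α) n * risingFactorial (μ + β) n :=
    le_of_lt (L1 μ α β hμ hα hβ n hn)
  have hN : (0:ℝ) ≤ (n:ℝ) := Nat.cast_nonneg n
  have e1 : ∀ y : ℝ, risingFactorial y (n + 1) = risingFactorial y n * (y + n) := fun y => rfl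
  have e3 : ∀ y : ℝ, risingFactorial y (n + 3)
      = risingFactorial y n * (y + n) * (y + n + 1) * (y + n + 2) := by
    intro y
    show (risingFactorial y n * (y + n) * (y + ↑(n+1))) * (y + ↑(n+2))
        = risingFactorial y n * (y + n) * (y + n + 1) * (y + n + 2)
    push_cast
    ring
  rw [e1, e1, e1, e1, e3, e3, e3, e3]
  set A := risingFactorial (μ + α) n with hA'
  set B := risingFactorial (μ + β) n with hB'
  set C := risingFactorial μ n with hC'
  set D := risingFactorial (μ + α + β) n with hD'
  set N := (n:ℝ) with hN'
  set a := (μ + α + N) * (μ + β + N) with ha'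
  set b := (μ + N) * (μ + α + β + N) with hb'
  set f := (μ + β + N + 1) * (μ + β + N + 2) + (μ + α + N + 1) * (μ + α + N + 2) with hf'
  have key : A * (μ + α + N) * (B * (μ + β + N) * (μ + β + N + 1) * (μ + β + N + 2))
      + A * (μ + α + N) * (μ + α + N + 1) * (μ + α + N + 2) * (B * (μ + β + N))
      - C * (μ + N) * (D * (μ + α + β + N) * (μ + α + β + N + 1) * (μ + α + β + N + 2))
      - C * (μ + N) * (μ + N + 1) * (μ + N + 2) * (D * (μ + α + β + N))
      = (A * B - C * D) * (a * f) + (C * D) * (α * β * (f - 2 * b)) := by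
    rw [ha', hb', hf']; ring
  rw [key]
  have haf : 0 ≤ a * f := by rw [ha', hf']; positivity
  have hfb : 0 < f - 2 * b := by
    have : f - 2 * b = 6 * (μ + N) + 4 + α ^ 2 + β ^ 2 + 3 * α + 3 * β := by
      rw [hf', hb']; ring
    rw [this]; positivity
  rcases eq_or_lt_of_le hμ with hμ0 | hμ0
  · -- μ = 0 : C = 0, so the first term is strictly positive
    have hC0 : C = 0 := by
      rw [hC', ← hμ0]
      rcases Nat.exists_eq_add_of_le hn with ⟨j, hj⟩
      rw [hj, add_comm 1 j, rf_zero]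
    rw [hC0]
    have haf' : 0 < a * f := by
      rw [ha', hf']
      have h1 : (0:ℝ) < μ + α + N := by linarith
      have h2 : (0:ℝ) < μ + β + N := by linarith
      positivity
    have h1 : 0 < (A * B - 0 * D) * (a * f) := by
      apply mul_pos _ haf'
      rw [zero_mul, sub_zero]
      exact mul_pos hA hB
    have h2 : (0:ℝ) ≤ 0 * D * (α * β * (f - 2 * b)) := by rw [zero_mul, zero_mul]
    linarith
  · -- μ > 0
    have hCpos : 0 < C := rf_pos hμ0 n
    have hDpos : 0 < D := rf_pos (by linarith) n
    have h1 : 0 ≤ (A * B - C * D) * (a * f) := mul_nonneg (by linarith) haf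
    have h2 : 0 < C * D * (α * β * (f - 2 * b)) :=
      mul_pos (mul_pos hCpos hDpos) (mul_pos (mul_pos hα hβ) hfb)
    linarith

theorem stmt_17 (m : ℕ) (hm : 2 ≤ m) (μ α β : ℝ) (hμ : 0 ≤ μ) (hα : 0 < α) (hβ : 0 < β)
    (k : ℕ) (hk : k = m / 2) :
    (m = 2 * k →
      0 < risingFactorial (μ + α) (2 * k) * risingFactorial (μ + β) (2 * k)
        - risingFactorial μ (2 * k) * risingFactorial (μ + α + β) (2 * k)) ∧
    (m = 2 * k + 1 →
      0 < risingFactorial (μ + α) (2 * k) * risingFactorial (μ + β) (2 * k + 2)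
        + risingFactorial (μ + α) (2 * k + 2) * risingFactorial (μ + β) (2 * k)
        - risingFactorial μ (2 * k) * risingFactorial (μ + α + β) (2 * k + 2)
        - risingFactorial μ (2 * k + 2) * risingFactorial (μ + α + β) (2 * k)) := by
  constructor
  · intro hme
    have h1 : 1 ≤ 2 * k := by omega
    have := L1 μ α β hμ hα hβ (2 * k) h1
    linarith
  · intro hmo
    have hk1 : 1 ≤ k := by omega
    have hn : 1 ≤ 2 * k - 1 := by omega
    have h := odd_case (2 * k - 1) μ α β hμ hα hβ hn
    have e1 : 2 * k - 1 + 1 = 2 * k := by omega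
    have e3 : 2 * k - 1 + 3 = 2 * k + 2 := by omega
    rw [e1, e3] at h
    linarith
end
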